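/- Let t and t' be finite trees, each with at least two vertices and with designated roots ρ and ρ' of degree one, and let T be the graph obtained from their disjoint union by identifying ρ with ρ'. Let π be a solid partition of the vertex set of T such that the quotient T^π is a cactus. Then every leaf v ≠ ρ of t lies in the same block of π as some leaf v' ≠ ρ' of t', and (with the convention that ρ corresponds to ρ') π induces a bijection between the set of leaves of t and the set of leaves of t'. -/

import Mathlib

set_option autoImplicit false

open Fin.NatCast
open Fin.CommRing

/-! ## Multigraphs -/

/-- A multigraph: a vertex type `V`, an edge type `E`, and an assignment to each edge of
its unordered pair of endpoints.  Loops and parallel edges are allowed. -/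
structure Multigraph (V E : Type) where
  ends : E → Sym2 V

namespace Multigraph

variable {V E : Type}

/-- `G.ReachAvoid F u v` : `v` can be reached from `u` by a walk using no edge of `F`. -/
inductive ReachAvoid (G : Multigraph V E) (F : Set E) : V → V → Prop
  | refl (v : V) : ReachAvoid G F v v
  | tail {u v w : V} (e : E) (he : e ∉ F) (hvw : G.ends e = s(v, w))
      (h : ReachAvoid G F u v) : ReachAvoid G F u w

/-- A multigraph is connected if any two vertices are joined by a walk. -/
def Connected (G : Multigraph V E) : Prop := ∀ u v : V, G.ReachAvoid ∅ u v

/-- `F` is a set of edges whose deletion disconnects `v` from `w`. -/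
def IsEdgeCut (G : Multigraph V E) (v w : V) (F : Set E) : Prop := ¬ G.ReachAvoid F v w

/-- Edge connectivity `λ(v, w)`: the minimum number of edges whose deletion
disconnects `v` from `w`. -/
noncomputable def edgeConn (G : Multigraph V E) (v w : V) : ℕ :=
  sInf {k : ℕ | ∃ F : Finset E, F.card = k ∧ G.IsEdgeCut v w ↑F}

/-- Walks in a multigraph, recorded together with the edges they traverse. -/
inductive Walk (G : Multigraph V E) : V → V → Type
  | nil (v : V) : Walk G v v
  | cons {u v w : V} (e : E) (huv : G.ends e = s(u, v)) (p : Walk G v w) : Walk G u w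

namespace Walk

variable {G : Multigraph V E}

/-- The list of edges traversed by a walk. -/
def edges : ∀ {u v : V}, G.Walk u v → List E
  | _, _, .nil _ => []
  | _, _, .cons e _ p => e :: edges p

/-- The list of vertices visited by a walk (including both endpoints). -/
def verts : ∀ {u v : V}, G.Walk u v → List V
  | _, v, .nil _ => [v]
  | u, _, .cons _ _ p => u :: verts p

/-- A walk is a path if it visits no vertex twice. -/
def IsPath {u v : V} (p : G.Walk u v) : Prop := p.verts.Nodup

end Walk

/-- `S` is the edge set of a simple cycle of `G`: a nonempty closed walk with no repeated
edges and no repeated vertices (other than the final return to the starting point).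
A loop is a simple cycle of length one. -/
def IsSimpleCycleOn [DecidableEq E] (G : Multigraph V E) (S : Finset E) : Prop :=
  ∃ (v : V) (p : G.Walk v v),
    p.edges ≠ [] ∧ p.edges.Nodup ∧ p.verts.dropLast.Nodup ∧ p.edges.toFinset = S

/-- A cactus: a connected multigraph in which every edge lies on exactly one simple cycle
(simple cycles being identified with their edge sets). -/
def IsCactus [DecidableEq E] (G : Multigraph V E) : Prop :=
  G.Connected ∧ ∀ e : E, ∃! S : Finset E, G.IsSimpleCycleOn S ∧ e ∈ S

/-- Two-edge-connected: connected, and still connected after deleting any single edge. -/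
def TwoEdgeConnected (G : Multigraph V E) : Prop :=
  G.Connected ∧ ∀ (e : E) (u v : V), G.ReachAvoid {e} u v

/-- The quotient multigraph by a partition (setoid) of the vertices: the vertices are the
blocks, and each edge joins the blocks of its original endpoints. -/
def quot (G : Multigraph V E) (σ : Setoid V) : Multigraph (Quotient σ) E :=
  ⟨fun e => (G.ends e).map (Quotient.mk σ)⟩

/-- Degree of a vertex: the number of edge-incidences at it (loops count twice). -/
def degree [DecidableEq V] [Fintype E] (G : Multigraph V E) (v : V) : ℕ :=
  ∑ e : E,
    Sym2.lift
      ⟨fun a b => (if a = v then 1 else 0) + (if b = v then 1 else 0),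
        fun _ _ => add_comm _ _⟩ (G.ends e)

/-- A leaf is a vertex of degree one. -/
def IsLeaf [DecidableEq V] [Fintype E] (G : Multigraph V E) (v : V) : Prop :=
  G.degree v = 1

/-- A tree: a connected multigraph with no simple cycles. -/
def IsTree [DecidableEq E] (G : Multigraph V E) : Prop :=
  G.Connected ∧ ∀ S : Finset E, ¬ G.IsSimpleCycleOn S

end Multigraph

/-- An embedding of the multigraph `H` into `G`, realizing `H` as a subgraph of `G`. -/
structure Multigraph.Embedding {W F V E : Type} (H : Multigraph W F) (G : Multigraph V E) where
  vmap : W → V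
  emap : F → E
  vmap_inj : Function.Injective vmap
  emap_inj : Function.Injective emap
  ends_map : ∀ f : F, G.ends (emap f) = (H.ends f).map vmap

/-! ## Multidigraphs -/

/-- A multidigraph: vertex type `V`, edge type `E`, and source and target maps. -/
structure Multidigraph (V E : Type) where
  src : E → V
  tgt : E → V

namespace Multidigraph

variable {V E : Type}

/-- The underlying multigraph of a multidigraph. -/
def toMultigraph (D : Multidigraph V E) : Multigraph V E :=
  ⟨fun e => s(D.src e, D.tgt e)⟩

/-- Directed walks in a multidigraph. -/
inductive DiWalk (D : Multidigraph V E) : V → V → Type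
  | nil (v : V) : DiWalk D v v
  | cons {u v w : V} (e : E) (hs : D.src e = u) (ht : D.tgt e = v)
      (p : DiWalk D v w) : DiWalk D u w

namespace DiWalk

variable {D : Multidigraph V E}

/-- The list of edges traversed by a directed walk. -/
def edges : ∀ {u v : V}, D.DiWalk u v → List E
  | _, _, .nil _ => []
  | _, _, .cons e _ _ p => e :: edges p

/-- The list of vertices visited by a directed walk. -/
def verts : ∀ {u v : V}, D.DiWalk u v → List V
  | _, v, .nil _ => [v]
  | u, _, .cons _ _ _ p => u :: verts p

end DiWalk

/-- `S` is the edge set of a simple directed cycle of `D`. -/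
def IsDiCycleOn [DecidableEq E] (D : Multidigraph V E) (S : Finset E) : Prop :=
  ∃ (v : V) (p : D.DiWalk v v),
    p.edges ≠ [] ∧ p.edges.Nodup ∧ p.verts.dropLast.Nodup ∧ p.edges.toFinset = S

/-- An oriented cactus: the underlying multigraph is a cactus and each of its simple
cycles (pads) is a directed cycle. -/
def IsOrientedCactus [DecidableEq E] (D : Multidigraph V E) : Prop :=
  D.toMultigraph.IsCactus ∧
    ∀ S : Finset E, D.toMultigraph.IsSimpleCycleOn S → D.IsDiCycleOn S

/-- The quotient multidigraph by a partition (setoid) of the vertices. -/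
def quot (D : Multidigraph V E) (σ : Setoid V) : Multidigraph (Quotient σ) E where
  src := fun e => Quotient.mk σ (D.src e)
  tgt := fun e => Quotient.mk σ (D.tgt e)

/-- Indegree of a vertex: the number of edges with target `v`. -/
def indeg [DecidableEq V] [Fintype E] (D : Multidigraph V E) (v : V) : ℕ :=
  (Finset.univ.filter fun e => D.tgt e = v).card

/-- Outdegree of a vertex: the number of edges with source `v`. -/
def outdeg [DecidableEq V] [Fintype E] (D : Multidigraph V E) (v : V) : ℕ :=
  (Finset.univ.filter fun e => D.src e = v).card

end Multidigraph

/-- An embedding of the multidigraph `H` into `G`, realizing `H` as a subgraph of `G`. -/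
structure Multidigraph.Embedding {W F V E : Type}
    (H : Multidigraph W F) (G : Multidigraph V E) where
  vmap : W → V
  emap : F → E
  vmap_inj : Function.Injective vmap
  emap_inj : Function.Injective emap
  src_map : ∀ f : F, G.src (emap f) = vmap (H.src f)
  tgt_map : ∀ f : F, G.tgt (emap f) = vmap (H.tgt f)

/-! ## Cycle graphs and non-crossing partitions -/

/-- The cycle graph of length `n`: vertices `Fin n`, edges `Fin n`, edge `i` joining
`v i` and `v (i+1)` (indices mod `n`). -/
def cycleGraph (n : ℕ) [NeZero n] : Multigraph (Fin n) (Fin n) :=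
  ⟨fun i => s(i, i + 1)⟩

/-- The cycle graph of length `n` in which each edge carries an orientation:
edge `i` is oriented counterclockwise (from `v i` to `v (i+1)`) if `orient i = true`,
and clockwise otherwise. -/
def cycleDigraph (n : ℕ) [NeZero n] (orient : Fin n → Bool) : Multidigraph (Fin n) (Fin n) where
  src := fun i => if orient i then i else i + 1
  tgt := fun i => if orient i then i + 1 else i

/-- A relation (e.g. a partition) on `Fin m` is non-crossing if there are no indices
`i₁ < i₂ < i₃ < i₄` with `i₁, i₃` in one block and `i₂, i₄` in a different block. -/
def NonCrossingRel {m : ℕ} (r : Fin m → Fin m → Prop) : Prop :=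
  ¬ ∃ i₁ i₂ i₃ i₄ : Fin m, i₁ < i₂ ∧ i₂ < i₃ ∧ i₃ < i₄ ∧ r i₁ i₃ ∧ r i₂ i₄ ∧ ¬ r i₁ i₂

/-- The union of a partition `σ` of the vertices `v₁, …, vₙ` (at the even positions) and
a partition `κ` of the edges `e₁, …, eₙ` (at the odd positions) of a cycle, as a relation
on the `2n` interlaced points `v₁, e₁, v₂, e₂, …, vₙ, eₙ`. -/
def interRel {n : ℕ} (σ κ : Setoid (Fin n)) (x y : Fin (2 * n)) : Prop :=
  (x.val % 2 = 0 ∧ y.val % 2 = 0 ∧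
    σ.r ⟨x.val / 2, by have := x.isLt; omega⟩ ⟨y.val / 2, by have := y.isLt; omega⟩) ∨
  (x.val % 2 = 1 ∧ y.val % 2 = 1 ∧
    κ.r ⟨x.val / 2, by have := x.isLt; omega⟩ ⟨y.val / 2, by have := y.isLt; omega⟩)

/-- `κ` is the Kreweras complement of `σ`: the largest partition of the edges such that
the union `σ ∪ κ` is non-crossing with respect to the interlaced (cyclic) order. -/
def IsKrewerasComplement {n : ℕ} (σ κ : Setoid (Fin n)) : Prop :=
  NonCrossingRel (interRel σ κ) ∧
    ∀ κ' : Setoid (Fin n), NonCrossingRel (interRel σ κ') → κ' ≤ κ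

open Classical in
/-- The block of the partition `κ` containing `i`, as a finite set. -/
noncomputable def setoidClass {n : ℕ} (κ : Setoid (Fin n)) (i : Fin n) : Finset (Fin n) :=
  Finset.univ.filter fun j => κ.r i j

open Fin.NatCast in
/-- `j` is the next element of `B` encountered strictly after `i` in the cyclic order of
`Fin n` (if `B = {i}` then `j = i` itself, one full turn later). -/
def CyclicNextIn {n : ℕ} [NeZero n] (B : Finset (Fin n)) (i j : Fin n) : Prop :=
  i ∈ B ∧ j ∈ B ∧ ∃ d : ℕ, 0 < d ∧ d ≤ n ∧ j = i + (d : Fin n) ∧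
    ∀ d' : ℕ, 0 < d' → d' < d → i + (d' : Fin n) ∉ B

/-! ## Wedges of two (di)graphs at their roots -/

/-- The canonical map from the vertices of `t'` into the wedge vertex type
`V ⊕ {x : V' // x ≠ ρ'}`, sending the root `ρ'` to (the image of) `ρ`. -/
def wedgeJ {V V' : Type} [DecidableEq V'] (ρ : V) (ρ' : V') :
    V' → V ⊕ {x : V' // x ≠ ρ'} :=
  fun x => if h : x = ρ' then Sum.inl ρ else Sum.inr ⟨x, h⟩

/-- The wedge of two multigraphs `t`, `t'` obtained by identifying `ρ ∈ t` with `ρ' ∈ t'`. -/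
def Multigraph.wedge {V E V' E' : Type} [DecidableEq V']
    (t : Multigraph V E) (t' : Multigraph V' E') (ρ : V) (ρ' : V') :
    Multigraph (V ⊕ {x : V' // x ≠ ρ'}) (E ⊕ E') :=
  ⟨fun e =>
    match e with
    | Sum.inl e => (t.ends e).map Sum.inl
    | Sum.inr e => (t'.ends e).map (wedgeJ ρ ρ')⟩

/-- The wedge of two multidigraphs `t`, `t'` obtained by identifying `ρ ∈ t` with `ρ' ∈ t'`. -/
def Multidigraph.wedge {V E V' E' : Type} [DecidableEq V']
    (t : Multidigraph V E) (t' : Multidigraph V' E') (ρ : V) (ρ' : V') :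
    Multidigraph (V ⊕ {x : V' // x ≠ ρ'}) (E ⊕ E') where
  src := fun e =>
    match e with
    | Sum.inl e => Sum.inl (t.src e)
    | Sum.inr e => wedgeJ ρ ρ' (t'.src e)
  tgt := fun e =>
    match e with
    | Sum.inl e => Sum.inl (t.tgt e)
    | Sum.inr e => wedgeJ ρ ρ' (t'.tgt e)

/-! ## Flowers (a cycle with graphs attached) and stars (trees wedged at a common root) -/

/-- The canonical map from the vertices of the `i`-th attached graph into the flower,
sending the basepoint `b i` to the cycle vertex `i`. -/
def flowerJ {n : ℕ} {W : Fin n → Type} [∀ i, DecidableEq (W i)]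
    (b : ∀ i, W i) (i : Fin n) :
    W i → Fin n ⊕ (Σ i, {x : W i // x ≠ b i}) :=
  fun x => if h : x = b i then Sum.inl i else Sum.inr ⟨i, x, h⟩

/-- The flower: a cycle of length `n` with the multigraph `d i` attached at the cycle
vertex `i` via its basepoint `b i`; the attached graphs are disjoint except through the
cycle, and `d i` meets the cycle exactly in the vertex `i`. -/
def flowerGraph {n : ℕ} [NeZero n] {W F : Fin n → Type} [∀ i, DecidableEq (W i)]
    (d : ∀ i, Multigraph (W i) (F i)) (b : ∀ i, W i) :
    Multigraph (Fin n ⊕ (Σ i, {x : W i // x ≠ b i})) (Fin n ⊕ (Σ i, F i)) :=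
  ⟨fun e =>
    match e with
    | Sum.inl k => s(Sum.inl k, Sum.inl (k + 1))
    | Sum.inr ⟨i, f⟩ => ((d i).ends f).map (flowerJ b i)⟩

/-- The canonical map from the vertices of the `i`-th tree into the star, sending the
root `r i` to the common amalgamated root. -/
def starJ {n : ℕ} {W : Fin n → Type} [∀ i, DecidableEq (W i)]
    (r : ∀ i, W i) (i : Fin n) :
    W i → Unit ⊕ (Σ i, {x : W i // x ≠ r i}) :=
  fun x => if h : x = r i then Sum.inl () else Sum.inr ⟨i, x, h⟩

/-- The star: the disjoint union of the multigraphs `t i` with all the roots `r i`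
identified to a single vertex. -/
def starGraph {n : ℕ} {W F : Fin n → Type} [∀ i, DecidableEq (W i)]
    (t : ∀ i, Multigraph (W i) (F i)) (r : ∀ i, W i) :
    Multigraph (Unit ⊕ (Σ i, {x : W i // x ≠ r i})) (Σ i, F i) :=
  ⟨fun e => ((t e.1).ends e.2).map (starJ r e.1)⟩

/-! ## Graphs of matrices -/

/-- The partition of `V` identifying the input `vin` with the output `vout` (and nothing
else). -/
def rootSetoid {V : Type} (vin vout : V) : Setoid V where
  r a b := a = b ∨ ((a = vin ∨ a = vout) ∧ (b = vin ∨ b = vout))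
  iseqv := by
    constructor
    · intro x; exact Or.inl rfl
    · rintro x y (rfl | ⟨hx, hy⟩)
      · exact Or.inl rfl
      · exact Or.inr ⟨hy, hx⟩
    · rintro x y z (rfl | ⟨hx, hy⟩) (rfl | ⟨hy', hz⟩)
      · exact Or.inl rfl
      · exact Or.inr ⟨hy', hz⟩
      · exact Or.inr ⟨hx, hy⟩
      · exact Or.inr ⟨hx, hz⟩

/-- The graph of matrices `Z_g(A₁, …, A_K)` associated to a bi-rooted multidigraph `g`
with input `vin`, output `vout` and edge ordering `o`. -/
noncomputable def graphOfMatrices {V E : Type} [Fintype V] [Fintype E] [DecidableEq V] {K N : ℕ}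
    (g : Multidigraph V E) (vin vout : V) (o : E ≃ Fin K)
    (A : Fin K → Matrix (Fin N) (Fin N) ℂ) : Matrix (Fin N) (Fin N) ℂ :=
  Matrix.of fun i j =>
    ∑ φ : V → Fin N,
      if φ vout = i ∧ φ vin = j then ∏ e : E, A (o e) (φ (g.tgt e)) (φ (g.src e)) else 0

/-! ## Set partitions as finite set systems -/

/-- `P` is a partition of the (finite) type `V`: its blocks are nonempty and every
element of `V` lies in exactly one block. -/
def IsPartitionOf (V : Type) [DecidableEq V] (P : Finset (Finset V)) : Prop :=
  (∀ B ∈ P, B.Nonempty) ∧ ∀ v : V, ∃! B, B ∈ P ∧ v ∈ B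

/-- The block of the partition `P` containing `v`. -/
def blockOf {V : Type} [DecidableEq V] (P : Finset (Finset V)) (hP : IsPartitionOf V P)
    (v : V) : {B : Finset V // B ∈ P} :=
  ⟨Finset.choose (fun B => v ∈ B) P (hP.2 v),
    Finset.choose_mem (fun B => v ∈ B) P (hP.2 v)⟩

-- ===================== auxiliary development =====================

open Finset

lemma sym2_rep {α : Type*} (z : Sym2 α) : ∃ x y, z = s(x, y) :=
  Sym2.ind (fun x y => ⟨x, y, rfl⟩) z

namespace Multigraph

variable {V E : Type}

/-- multiplicity of `v` as an endpoint of `e` (2 for a loop). -/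
def mult [DecidableEq V] (G : Multigraph V E) (e : E) (v : V) : ℕ :=
  Sym2.lift ⟨fun a b => (if a = v then 1 else 0) + (if b = v then 1 else 0),
    fun _ _ => add_comm _ _⟩ (G.ends e)

lemma mult_eq [DecidableEq V] {G : Multigraph V E} {e : E} {x y : V} (h : G.ends e = s(x, y)) (v : V) :
    G.mult e v = (if x = v then 1 else 0) + (if y = v then 1 else 0) := by
  rw [mult, h, Sym2.lift_mk]

lemma degree_eq_sum_mult [DecidableEq V] [Fintype E] (G : Multigraph V E) (v : V) :
    G.degree v = ∑ e : E, G.mult e v := rfl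

lemma mult_pos [DecidableEq V] {G : Multigraph V E} {e : E} {v : V} (h : v ∈ G.ends e) : 0 < G.mult e v := by
  obtain ⟨x, y, hxy⟩ := sym2_rep (G.ends e)
  rw [hxy, Sym2.mem_iff] at h
  rw [mult_eq hxy]
  rcases h with h | h <;> subst h <;> simp

lemma mem_of_mult_pos [DecidableEq V] {G : Multigraph V E} {e : E} {v : V} (h : 0 < G.mult e v) :
    v ∈ G.ends e := by
  obtain ⟨x, y, hxy⟩ := sym2_rep (G.ends e)
  rw [mult_eq hxy] at h
  rw [hxy, Sym2.mem_iff]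
  by_contra hc
  push_neg at hc
  simp [Ne.symm hc.1, Ne.symm hc.2] at h

lemma sum_mult_eq_two [Fintype V] [DecidableEq V] (G : Multigraph V E) (e : E) :
    ∑ v : V, G.mult e v = 2 := by
  obtain ⟨x, y, hxy⟩ := sym2_rep (G.ends e)
  have : ∀ v : V, G.mult e v = (if x = v then 1 else 0) + (if y = v then 1 else 0) :=
    fun v => mult_eq hxy v
  simp only [this, Finset.sum_add_distrib, Finset.sum_ite_eq, Finset.mem_univ, if_true]

namespace Walk

variable {G : Multigraph V E}

lemma length_verts : ∀ {u w : V} (p : G.Walk u w), p.verts.length = p.edges.length + 1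
  | _, _, .nil v => rfl
  | _, _, .cons e h p => by simp [verts, edges, length_verts p]

lemma verts_ne_nil : ∀ {u w : V} (p : G.Walk u w), p.verts ≠ []
  | _, _, .nil v => by simp [verts]
  | _, _, .cons e h p => by simp [verts]

lemma verts_getElem_zero : ∀ {u w : V} (p : G.Walk u w) (h : 0 < p.verts.length),
    p.verts[0]'h = u
  | _, _, .nil v, _ => rfl
  | _, _, .cons e he p, _ => rfl

lemma verts_getLast : ∀ {u w : V} (p : G.Walk u w) (h : p.verts ≠ []),
    p.verts.getLast h = w
  | _, _, .nil v, _ => rfl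
  | u, _, .cons e he p, h => by
      show (u :: p.verts).getLast (by simp) = _
      rw [List.getLast_cons (verts_ne_nil p)]
      exact verts_getLast p _

lemma ends_getElem : ∀ {u w : V} (p : G.Walk u w) (i : ℕ) (hi : i < p.edges.length),
    G.ends (p.edges[i]'hi) = s(p.verts[i]'(by rw [length_verts]; omega),
      p.verts[i+1]'(by rw [length_verts]; omega))
  | _, _, .cons e he p, 0, hi => by
      simp only [edges, verts, List.getElem_cons_zero, List.getElem_cons_succ]
      rw [verts_getElem_zero p (by rw [length_verts]; omega)]
      exact he
  | _, _, .cons e he p, i+1, hi => by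
      simp only [edges, verts, List.getElem_cons_succ]
      exact ends_getElem p i (by simpa [edges] using hi)

/-- change the endpoints of a walk along equalities. -/
def copy {u v u' v' : V} (p : G.Walk u v) (hu : u = u') (hv : v = v') : G.Walk u' v' :=
  hu ▸ hv ▸ p

@[simp] lemma copy_edges {u v u' v' : V} (p : G.Walk u v) (hu : u = u') (hv : v = v') :
    (p.copy hu hv).edges = p.edges := by subst hu; subst hv; rfl

@[simp] lemma copy_verts {u v u' v' : V} (p : G.Walk u v) (hu : u = u') (hv : v = v') :
    (p.copy hu hv).verts = p.verts := by subst hu; subst hv; rfl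

/-- `nil` with a propositional endpoint equality. -/
def nil' {a b : V} (h : a = b) : G.Walk a b := h ▸ .nil a

@[simp] lemma nil'_edges {a b : V} (h : a = b) : (nil' (G := G) h).edges = [] := by
  subst h; rfl

@[simp] lemma nil'_verts {a b : V} (h : a = b) : (nil' (G := G) h).verts = [b] := by
  subst h; rfl

end Walk


lemma fin_val_add_one' {k : ℕ} [NeZero k] (i : Fin k) :
    ((i + 1 : Fin k) : ℕ) = if (i : ℕ) + 1 = k then 0 else (i : ℕ) + 1 := by
  have hk : 0 < k := Nat.pos_of_ne_zero (NeZero.ne k)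
  rw [Fin.val_add, Fin.val_one']
  rcases Nat.lt_or_ge 1 k with h1 | h1
  · rw [Nat.mod_eq_of_lt h1]
    split_ifs with h
    · rw [h, Nat.mod_self]
    · exact Nat.mod_eq_of_lt (by omega)
  · have hk1 : k = 1 := by omega
    subst hk1
    have hi0 : (i : ℕ) = 0 := by omega
    simp [hi0]

lemma list_getElem_congr {α : Type*} (l : List α) {n m : ℕ} (h : n = m) (hn : n < l.length) :
    l[n]'hn = l[m]'(h ▸ hn) := by subst h; rfl

/-- functional description of a simple cycle -/
def IsFCycle (G : Multigraph V E) {k : ℕ} [NeZero k] (es : Fin k → E) (vs : Fin k → V) : Prop :=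
  Function.Injective es ∧ Function.Injective vs ∧
    ∀ i : Fin k, G.ends (es i) = s(vs i, vs (i + 1))

def NoFCycle (G : Multigraph V E) : Prop :=
  ∀ (k : ℕ) (_ : NeZero k) (es : Fin k → E) (vs : Fin k → V), ¬ G.IsFCycle es vs

lemma exists_fcycle_of_isSimpleCycleOn [DecidableEq E] {G : Multigraph V E} {S : Finset E}
    (h : G.IsSimpleCycleOn S) :
    ∃ (k : ℕ) (_ : NeZero k) (es : Fin k → E) (vs : Fin k → V),
      G.IsFCycle es vs ∧ Finset.image es Finset.univ = S := by
  obtain ⟨v, p, hne, hnodE, hnodV, hS⟩ := h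
  set k := p.edges.length with hk
  have hkpos : 0 < k := List.length_pos_iff.2 hne
  haveI : NeZero k := ⟨hkpos.ne'⟩
  have hvlen : p.verts.length = k + 1 := by rw [Walk.length_verts]
  have hvl : ∀ i : Fin k, (i : ℕ) < p.verts.length := fun i => by
    have := i.2; omega
  have hvl1 : ∀ i : Fin k, ((i + 1 : Fin k) : ℕ) < p.verts.length := fun i => hvl _
  refine ⟨k, inferInstance, fun i => p.edges[(i : ℕ)]'i.2, fun i => p.verts[(i : ℕ)]'(hvl i),
    ⟨?_, ?_, ?_⟩, ?_⟩
  · intro i j hij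
    have h2 : (⟨(i:ℕ), i.2⟩ : Fin p.edges.length) = ⟨(j:ℕ), j.2⟩ :=
      (List.nodup_iff_injective_get.1 hnodE) (by simpa using hij)
    have h3 := congrArg Fin.val h2
    exact Fin.ext h3
  · intro i j hij
    have hdl : p.verts.dropLast.length = k := by
      rw [List.length_dropLast, hvlen]; omega
    have hi : (i : ℕ) < p.verts.dropLast.length := by rw [hdl]; exact i.2
    have hj : (j : ℕ) < p.verts.dropLast.length := by rw [hdl]; exact j.2
    have h1 : p.verts.dropLast.get ⟨(i:ℕ), hi⟩ = p.verts.dropLast.get ⟨(j:ℕ), hj⟩ := by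
      simp only [List.get_eq_getElem, List.getElem_dropLast]
      exact hij
    have h2 := (List.nodup_iff_injective_get.1 hnodV) h1
    have h3 := congrArg Fin.val h2
    exact Fin.ext h3
  · intro i
    have hend := Walk.ends_getElem p i i.2
    have hv1 := fin_val_add_one' i
    have hvv : p.verts[((i + 1 : Fin k) : ℕ)]'(hvl1 i) = p.verts[(i:ℕ)+1]'(by
        have := i.2; omega) := by
      by_cases hc : (i : ℕ) + 1 = k
      · have hz : ((i + 1 : Fin k) : ℕ) = 0 := by rw [hv1, if_pos hc]
        rw [list_getElem_congr p.verts hz]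
        rw [Walk.verts_getElem_zero p (by omega)]
        have hgl := Walk.verts_getLast p (Walk.verts_ne_nil p)
        rw [List.getLast_eq_getElem] at hgl
        rw [list_getElem_congr p.verts (show (i:ℕ)+1 = p.verts.length - 1 by omega)]
        exact hgl.symm
      · have hz : ((i + 1 : Fin k) : ℕ) = (i:ℕ) + 1 := by rw [hv1, if_neg hc]
        exact list_getElem_congr p.verts hz _
    beta_reduce
    rw [hend, hvv]
  · ext a
    simp only [Finset.mem_image, Finset.mem_univ, true_and, ← hS, List.mem_toFinset]
    constructor
    · rintro ⟨i, rfl⟩; exact List.getElem_mem _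
    · intro ha
      obtain ⟨i, hi, rfl⟩ := List.getElem_of_mem ha
      exact ⟨⟨i, hi⟩, rfl⟩

end Multigraph

namespace Multigraph

section FC2

variable {V E : Type} {G : Multigraph V E} {k : ℕ} [NeZero k]

lemma natCast_fin_val {j : ℕ} (hj : j < k) : (((j : Fin k)) : ℕ) = j := by
  rw [Fin.val_natCast]; exact Nat.mod_eq_of_lt hj

/-- build the closing walk of a functional cycle -/
def chain (es : Fin k → E) (vs : Fin k → V)
    (hends : ∀ i : Fin k, G.ends (es i) = s(vs i, vs (i + 1))) :
    (d : ℕ) → (j : ℕ) → (j + d = k) → G.Walk (vs (j : Fin k)) (vs (k : Fin k))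
  | 0, j, h => Walk.nil' (congrArg (fun n : ℕ => vs (n : Fin k)) (by omega))
  | d+1, j, h => Walk.cons (es (j : Fin k))
      ((hends (j : Fin k)).trans (by rw [show ((j : Fin k) + 1) = ((j+1 : ℕ) : Fin k) from by
        rw [Nat.cast_add, Nat.cast_one]]))
      (chain es vs hends d (j+1) (by omega))

lemma chain_edges (es : Fin k → E) (vs : Fin k → V)
    (hends : ∀ i : Fin k, G.ends (es i) = s(vs i, vs (i + 1))) :
    ∀ (d j : ℕ) (h : j + d = k),
      (chain es vs hends d j h).edges = (List.range' j d).map (fun n : ℕ => es ((n : ℕ) : Fin k))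
  | 0, j, h => by simp [chain, Walk.nil'_edges]
  | d+1, j, h => by
      rw [chain, Walk.edges, chain_edges es vs hends d (j+1) (by omega), List.range'_succ]
      rfl

lemma chain_verts (es : Fin k → E) (vs : Fin k → V)
    (hends : ∀ i : Fin k, G.ends (es i) = s(vs i, vs (i + 1))) :
    ∀ (d j : ℕ) (h : j + d = k),
      (chain es vs hends d j h).verts = (List.range' j (d+1)).map (fun n : ℕ => vs ((n : ℕ) : Fin k))
  | 0, j, h => by
      have hj : j = k := by omega
      subst hj
      simp [chain, Walk.nil'_verts]
  | d+1, j, h => by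
      rw [chain, Walk.verts, chain_verts es vs hends d (j+1) (by omega), List.range'_succ]
      rfl

lemma isSimpleCycleOn_of_fcycle [DecidableEq E] {es : Fin k → E} {vs : Fin k → V}
    (hfc : G.IsFCycle es vs) :
    G.IsSimpleCycleOn (Finset.image es Finset.univ) := by
  obtain ⟨hes, hvs, hends⟩ := hfc
  have hkpos : 0 < k := Nat.pos_of_ne_zero (NeZero.ne k)
  have h00 : vs ((0 : ℕ) : Fin k) = vs ((k : ℕ) : Fin k) := by
    rw [Nat.cast_zero, Fin.natCast_self]
  refine ⟨vs ((k : ℕ) : Fin k), (chain es vs hends k 0 (by omega)).copy h00 rfl, ?_, ?_, ?_, ?_⟩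
  · rw [Walk.copy_edges, chain_edges]
    intro hcon
    have hlen := congrArg List.length hcon
    rw [List.length_map, List.length_range'] at hlen
    simp at hlen
    omega
  · rw [Walk.copy_edges, chain_edges]
    refine List.Nodup.map_on (l := List.range' 0 k) (f := fun n : ℕ => es ((n : ℕ) : Fin k))
      ?_ (by rw [← List.range_eq_range']; exact List.nodup_range)
    intro x hx y hy hxy
    rw [List.mem_range'_1] at hx hy
    have h1 := hes hxy
    have hxv := natCast_fin_val (k := k) (by omega : x < k)
    have hyv := natCast_fin_val (k := k) (by omega : y < k)
    rw [← hxv, ← hyv, h1]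
  · rw [Walk.copy_verts, chain_verts]
    have hr : List.range' 0 (k+1) = List.range (k+1) := by rw [← List.range_eq_range']
    rw [hr, List.range_succ,
      List.map_append (f := fun n : ℕ => vs ((n : ℕ) : Fin k)) (l₁ := List.range k)]
    simp only [List.map_cons, List.map_nil, List.dropLast_concat]
    refine List.Nodup.map_on (l := List.range k) (f := fun n : ℕ => vs ((n : ℕ) : Fin k))
      ?_ (List.nodup_range)
    intro x hx y hy hxy
    rw [List.mem_range] at hx hy
    have h1 := hvs hxy
    rw [← natCast_fin_val (k := k) hx, ← natCast_fin_val (k := k) hy, h1]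
  · ext a
    rw [Walk.copy_edges, chain_edges]
    simp only [List.mem_toFinset, List.mem_map, Finset.mem_image, Finset.mem_univ, true_and]
    constructor
    · rintro ⟨n, hn, rfl⟩
      exact ⟨_, rfl⟩
    · rintro ⟨i, rfl⟩
      refine ⟨(i : ℕ), ?_, by rw [Fin.cast_val_eq_self]⟩
      rw [List.mem_range'_1]
      exact ⟨by omega, by have := i.2; omega⟩

end FC2

lemma noFCycle_of_no_cycles {V E : Type} [DecidableEq E] {G : Multigraph V E}
    (h : ∀ S : Finset E, ¬ G.IsSimpleCycleOn S) : G.NoFCycle :=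
  fun _ _ _ _ hfc => h _ (isSimpleCycleOn_of_fcycle hfc)

lemma NoFCycle.no_loop {V E : Type} {G : Multigraph V E} (h : G.NoFCycle) {e : E} {x y : V}
    (hxy : G.ends e = s(x, y)) : x ≠ y := by
  rintro rfl
  exact h 1 inferInstance (fun _ => e) (fun _ => x)
    ⟨fun a b _ => Subsingleton.elim a b, fun a b _ => Subsingleton.elim a b,
     fun i => by simpa using hxy⟩


end Multigraph

namespace Multigraph

variable {V E : Type}

lemma ends_eq_of_mem {G : Multigraph V E} {e : E} {v : V} (h : v ∈ G.ends e) :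
    ∃ x, G.ends e = s(v, x) := by
  obtain ⟨x, y, hxy⟩ := sym2_rep (G.ends e)
  rw [hxy, Sym2.mem_iff] at h
  rcases h with rfl | rfl
  · exact ⟨y, hxy⟩
  · exact ⟨x, hxy.trans (Sym2.eq_swap)⟩

lemma exists_edge_at_start {G : Multigraph V E} {F : Set E} {u v : V}
    (h : G.ReachAvoid F u v) : u = v ∨ ∃ e, u ∈ G.ends e := by
  induction h with
  | refl => exact Or.inl rfl
  | tail e he hvw h ih =>
    rcases ih with rfl | ⟨f, hf⟩
    · exact Or.inr ⟨e, by rw [hvw]; exact Sym2.mem_iff.2 (Or.inl rfl)⟩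
    · exact Or.inr ⟨f, hf⟩

lemma degree_pos [Fintype V] [Fintype E] [DecidableEq V] {G : Multigraph V E}
    (hconn : G.Connected) (hV : 1 < Fintype.card V) (u : V) : 0 < G.degree u := by
  obtain ⟨v, hv⟩ := Fintype.exists_ne_of_one_lt_card hV u
  rcases exists_edge_at_start (hconn u v) with h | ⟨e, he⟩
  · exact absurd h.symm hv
  · rw [degree_eq_sum_mult]
    exact lt_of_lt_of_le (mult_pos he)
      (Finset.single_le_sum (f := fun e : E => G.mult e u) (fun _ _ => Nat.zero_le _)
        (Finset.mem_univ e))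

lemma unique_incident [Fintype E] [DecidableEq V] {G : Multigraph V E} {w : V}
    (h : G.degree w = 1) :
    ∃ f₀ : E, (w ∈ G.ends f₀) ∧ (∀ e, w ∈ G.ends e → e = f₀) ∧ G.mult f₀ w = 1 := by
  classical
  rw [degree_eq_sum_mult] at h
  have hex : ∃ f, 0 < G.mult f w := by
    by_contra hc
    push_neg at hc
    simp only [Nat.le_zero] at hc
    rw [Finset.sum_eq_zero (fun f _ => hc f)] at h
    omega
  obtain ⟨f₀, hf₀⟩ := hex
  have huniq : ∀ e, w ∈ G.ends e → e = f₀ := by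
    intro e hew
    by_contra hne
    have h2 : G.mult e w + G.mult f₀ w ≤ ∑ f : E, G.mult f w := by
      have h3 : ∑ x ∈ ({e, f₀} : Finset E), G.mult x w ≤ ∑ f : E, G.mult f w :=
        Finset.sum_le_sum_of_subset (Finset.subset_univ _)
      rwa [Finset.sum_pair hne] at h3
    rw [h] at h2
    have := mult_pos hew
    omega
  have hle : G.mult f₀ w ≤ ∑ f : E, G.mult f w :=
    Finset.single_le_sum (f := fun f : E => G.mult f w) (fun _ _ => Nat.zero_le _)
      (Finset.mem_univ _)
  rw [h] at hle
  exact ⟨f₀, mem_of_mult_pos hf₀, huniq, by omega⟩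

lemma path_es_inj {G : Multigraph V E} {j : ℕ} {vs : Fin (j+1) → V} {es : Fin j → E}
    (hvs : Function.Injective vs)
    (hends : ∀ i : Fin j, G.ends (es i) = s(vs i.castSucc, vs i.succ)) :
    Function.Injective es := by
  intro a b hab
  have h : s(vs a.castSucc, vs a.succ) = s(vs b.castSucc, vs b.succ) := by
    rw [← hends a, hab, hends b]
  rw [Sym2.eq_iff] at h
  rcases h with ⟨h1, _⟩ | ⟨h1, h2⟩
  · have := congrArg Fin.val (hvs h1)
    simp only [Fin.coe_castSucc] at this
    exact Fin.ext this
  · have e1 := congrArg Fin.val (hvs h1)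
    have e2 := congrArg Fin.val (hvs h2)
    simp only [Fin.coe_castSucc, Fin.val_succ] at e1 e2
    omega

lemma exists_degree_one [Fintype V] [Fintype E] [DecidableEq V] {G : Multigraph V E}
    (hnc : G.NoFCycle) (e₀ : E) : ∃ w, G.degree w = 1 := by
  classical
  set P : ℕ → Prop := fun j => ∃ (vs : Fin (j+1) → V) (es : Fin j → E),
    Function.Injective vs ∧ ∀ i : Fin j, G.ends (es i) = s(vs i.castSucc, vs i.succ) with hP
  have h1 : P 1 := by
    obtain ⟨x, y, hxy⟩ := sym2_rep (G.ends e₀)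
    have hne : x ≠ y := hnc.no_loop hxy
    refine ⟨![x, y], ![e₀], ?_, ?_⟩
    · intro a b hab
      fin_cases a <;> fin_cases b <;> simp_all
    · intro i
      fin_cases i
      simpa using hxy
  have hbdd : ∀ j, P j → j < Fintype.card V := by
    rintro j ⟨vs, es, hvs, _⟩
    have := Fintype.card_le_of_injective vs hvs
    simp only [Fintype.card_fin] at this
    omega
  have hne : Set.Nonempty {j | P j} := ⟨1, h1⟩
  have hbdd' : BddAbove {j | P j} := ⟨Fintype.card V, fun j hj => (hbdd j hj).le⟩
  set J := sSup {j | P j} with hJ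
  have hJP : P J := Nat.sSup_mem hne hbdd'
  have hJmax : ∀ j, P j → j ≤ J := fun j hj => le_csSup hbdd' hj
  have hJ1 : 1 ≤ J := hJmax 1 h1
  obtain ⟨vs, es, hvs, hends⟩ := hJP
  have hesinj := path_es_inj hvs hends
  refine ⟨vs 0, ?_⟩
  rw [degree_eq_sum_mult]
  have hzlt : 0 < J := hJ1
  set e₁ := es ⟨0, hzlt⟩ with he₁
  have key : ∀ f : E, G.mult f (vs 0) = if f = e₁ then 1 else 0 := by
    intro f
    split_ifs with hf
    · subst hf
      rw [mult_eq (hends ⟨0, hzlt⟩)]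
      have hc0 : (⟨0, hzlt⟩ : Fin J).castSucc = (0 : Fin (J+1)) := rfl
      have hs0 : (⟨0, hzlt⟩ : Fin J).succ ≠ (0 : Fin (J+1)) := Fin.succ_ne_zero _
      rw [hc0, if_pos rfl, if_neg (fun hcon => hs0 (hvs hcon))]
    · by_contra hmne
      have hpos : 0 < G.mult f (vs 0) := Nat.pos_of_ne_zero hmne
      have hmemw : vs 0 ∈ G.ends f := mem_of_mult_pos hpos
      obtain ⟨x, hxs⟩ := ends_eq_of_mem hmemw
      have hxw : vs 0 ≠ x := hnc.no_loop hxs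
      by_cases hx : ∃ m : Fin (J+1), vs m = x
      · obtain ⟨m, hm⟩ := hx
        have hm0 : m ≠ 0 := by
          rintro rfl
          exact hxw hm
        have hmv : 0 < (m : ℕ) := by
          rcases Nat.eq_zero_or_pos (m : ℕ) with h0 | h0
          · exact absurd (Fin.ext h0) hm0
          · exact h0
        set mv := (m : ℕ) with hmv'
        haveI : NeZero (mv + 1) := ⟨Nat.succ_ne_zero mv⟩
        have hmlt : mv < J + 1 := m.2
        apply hnc (mv + 1) inferInstance
          (fun i : Fin (mv + 1) => if h : (i : ℕ) < mv then es ⟨(i : ℕ), by omega⟩ else f)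
          (fun i : Fin (mv + 1) => vs ⟨(i : ℕ), by omega⟩)
        have hvs'inj : Function.Injective
            (fun i : Fin (mv + 1) => vs ⟨(i : ℕ), by omega⟩) := by
          intro a b hab
          simp only at hab
          have := congrArg Fin.val (hvs hab)
          exact Fin.ext this
        have hnotf : ∀ i : Fin (mv + 1), ∀ _hi : (i : ℕ) < mv, es ⟨(i : ℕ), by omega⟩ ≠ f := by
          intro i hi hcon
          have hends_i := hends ⟨(i : ℕ), by omega⟩
          rw [hcon, hxs] at hends_i
          rw [Sym2.eq_iff] at hends_i
          rcases hends_i with ⟨ha, hb⟩ | ⟨ha, _⟩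
          · have hi0 := congrArg Fin.val (hvs ha)
            simp only [Fin.val_zero, Fin.coe_castSucc] at hi0
            apply hf
            rw [← hcon, he₁]
            congr 1
            exact Fin.ext hi0.symm
          · exact absurd (hvs ha).symm (Fin.succ_ne_zero _)
        refine ⟨?_, hvs'inj, ?_⟩
        · intro a b hab
          simp only at hab
          by_cases ha : (a : ℕ) < mv <;> by_cases hb : (b : ℕ) < mv
          · rw [dif_pos ha, dif_pos hb] at hab
            have := congrArg Fin.val (hesinj hab)
            exact Fin.ext this
          · rw [dif_pos ha, dif_neg hb] at hab
            exact absurd hab (hnotf a ha)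
          · rw [dif_neg ha, dif_pos hb] at hab
            exact absurd hab.symm (hnotf b hb)
          · have h1 : (a : ℕ) = mv := by have := a.2; omega
            have h2 : (b : ℕ) = mv := by have := b.2; omega
            exact Fin.ext (h1.trans h2.symm)
        · intro i
          simp only
          by_cases hi : (i : ℕ) < mv
          · rw [dif_pos hi]
            have hv1 : vs (⟨(i : ℕ), by omega⟩ : Fin (J+1)) =
                vs (⟨(i : ℕ), by omega⟩ : Fin J).castSucc :=
              congrArg vs (Fin.ext rfl)
            have hv2 : vs (⟨(((i + 1 : Fin (mv+1))) : ℕ),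
                by have := ((i + 1 : Fin (mv+1))).isLt; omega⟩ : Fin (J+1)) =
                vs (⟨(i : ℕ), by omega⟩ : Fin J).succ := by
              apply congrArg vs
              apply Fin.ext
              have hone : ((1 : Fin (mv+1)) : ℕ) = 1 := by
                rw [Fin.val_one']; exact Nat.mod_eq_of_lt (by omega)
              simp only [Fin.val_succ]
              rw [Fin.val_add, hone, Nat.mod_eq_of_lt (by omega)]
            rw [hv1, hv2]
            exact hends _
          · rw [dif_neg hi]
            have hival : (i : ℕ) = mv := by have := i.2; omega
            have hv1 : vs (⟨(i : ℕ), by omega⟩ : Fin (J+1)) = vs m :=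
              congrArg vs (Fin.ext hival)
            have hv2 : vs (⟨(((i + 1 : Fin (mv+1))) : ℕ),
                by have := ((i + 1 : Fin (mv+1))).isLt; omega⟩ : Fin (J+1)) = vs 0 := by
              apply congrArg vs
              apply Fin.ext
              have hone : ((1 : Fin (mv+1)) : ℕ) = 1 := by
                rw [Fin.val_one']; exact Nat.mod_eq_of_lt (by omega)
              simp only [Fin.val_zero]
              rw [Fin.val_add, hone, hival, Nat.mod_self]
            rw [hv1, hv2, hxs, hm]
            exact Sym2.eq_swap
      · push_neg at hx
        have hPJ1 : P (J + 1) := by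
          refine ⟨fun i : Fin (J+2) =>
              if h : (i : ℕ) = 0 then x else vs ⟨(i : ℕ) - 1, by have := i.2; omega⟩,
            fun i : Fin (J+1) =>
              if h : (i : ℕ) = 0 then f else es ⟨(i : ℕ) - 1, by have := i.2; omega⟩, ?_, ?_⟩
          · intro a b hab
            simp only at hab
            by_cases ha : (a : ℕ) = 0 <;> by_cases hb : (b : ℕ) = 0
            · exact Fin.ext (ha.trans hb.symm)
            · rw [dif_pos ha, dif_neg hb] at hab
              exact absurd hab.symm (hx _)
            · rw [dif_neg ha, dif_pos hb] at hab
              exact absurd hab (hx _)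
            · rw [dif_neg ha, dif_neg hb] at hab
              have := congrArg Fin.val (hvs hab)
              simp only at this
              apply Fin.ext
              omega
          · intro i
            simp only
            have hcs : ((i.castSucc : Fin (J+2)) : ℕ) = (i : ℕ) := rfl
            have hsc : ((i.succ : Fin (J+2)) : ℕ) = (i : ℕ) + 1 := rfl
            by_cases hi0 : (i : ℕ) = 0
            · rw [dif_pos hi0, dif_pos (by rw [hcs]; exact hi0), dif_neg (by rw [hsc]; omega)]
              have hv2 : vs ⟨((i.succ : Fin (J+2)) : ℕ) - 1, by have := i.succ.2; omega⟩ =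
                  vs 0 := congrArg vs (Fin.ext (by simp [hsc, hi0]))
              rw [hv2, hxs]
              exact Sym2.eq_swap
            · rw [dif_neg hi0, dif_neg (by rw [hcs]; exact hi0), dif_neg (by rw [hsc]; omega)]
              have hends_i := hends ⟨(i : ℕ) - 1, by have := i.2; omega⟩
              have hv1 : vs ⟨((i.castSucc : Fin (J+2)) : ℕ) - 1, by have := i.castSucc.2; omega⟩
                  = vs (⟨(i : ℕ) - 1, by have := i.2; omega⟩ : Fin J).castSucc :=
                congrArg vs (Fin.ext rfl)
              have hv2 : vs ⟨((i.succ : Fin (J+2)) : ℕ) - 1, by have := i.succ.2; omega⟩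
                  = vs (⟨(i : ℕ) - 1, by have := i.2; omega⟩ : Fin J).succ :=
                congrArg vs (Fin.ext (by simp only [hsc, Fin.val_succ]; omega))
              rw [hv1, hv2]
              exact hends _
        have := hJmax (J + 1) hPJ1
        omega
  rw [Finset.sum_congr rfl (fun f _ => key f)]
  simp

end Multigraph

namespace Multigraph

variable {V E : Type}

/-- delete the vertex `w`; `j₀` is a junk value. -/
def gdel [DecidableEq V] (G : Multigraph V E) (w : V) (j₀ : {x : V // x ≠ w}) :
    Multigraph {x : V // x ≠ w} {e : E // w ∉ G.ends e} :=
  ⟨fun e => (G.ends e.val).map (fun x => if h : x = w then j₀ else ⟨x, h⟩)⟩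

lemma gdel_ends [DecidableEq V] {G : Multigraph V E} {w : V} {j₀ : {x : V // x ≠ w}}
    {e : {e : E // w ∉ G.ends e}} {x y : V} (h : G.ends e.val = s(x, y)) :
    ∃ (hx : x ≠ w) (hy : y ≠ w), (G.gdel w j₀).ends e = s(⟨x, hx⟩, ⟨y, hy⟩) := by
  have hx : x ≠ w := by
    rintro rfl
    exact e.2 (by rw [h]; exact Sym2.mem_iff.2 (Or.inl rfl))
  have hy : y ≠ w := by
    rintro rfl
    exact e.2 (by rw [h]; exact Sym2.mem_iff.2 (Or.inr rfl))
  refine ⟨hx, hy, ?_⟩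
  show (G.ends e.val).map _ = _
  rw [h, Sym2.map_pair_eq, dif_neg hx, dif_neg hy]

lemma gdel_noFCycle [DecidableEq V] {G : Multigraph V E} {w : V} {j₀ : {x : V // x ≠ w}}
    (hnc : G.NoFCycle) : (G.gdel w j₀).NoFCycle := by
  intro k hk es vs hfc
  obtain ⟨hes, hvs, hends⟩ := hfc
  apply hnc k hk (fun i => (es i).val) (fun i => (vs i).val)
  refine ⟨fun a b hab => hes (Subtype.ext hab), fun a b hab => hvs (Subtype.ext hab), ?_⟩
  intro i
  obtain ⟨x, y, hxy⟩ := sym2_rep (G.ends (es i).val)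
  obtain ⟨hx, hy, hmap⟩ := gdel_ends (j₀ := j₀) hxy
  rw [hends i] at hmap
  rw [hxy]
  rw [Sym2.eq_iff] at hmap
  simp only
  rcases hmap with ⟨h1, h2⟩ | ⟨h1, h2⟩
  · rw [h1, h2]
  · rw [h1, h2, Sym2.eq_swap]

lemma gdel_connected [DecidableEq V] {G : Multigraph V E} (hconn : G.Connected) {w z : V}
    (hz : z ≠ w) {f₀ : E} (hf₀ : G.ends f₀ = s(w, z)) (huniq : ∀ e, w ∈ G.ends e → e = f₀) :
    (G.gdel w ⟨z, hz⟩).Connected := by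
  set j₀ : {x : V // x ≠ w} := ⟨z, hz⟩ with hj₀
  have main : ∀ (u : {x // x ≠ w}) (x : V), G.ReachAvoid ∅ u.val x →
      (∀ hx : x ≠ w, (G.gdel w j₀).ReachAvoid ∅ u ⟨x, hx⟩) ∧
      (x = w → (G.gdel w j₀).ReachAvoid ∅ u j₀) := by
    intro u x hx
    induction hx with
    | refl =>
      constructor
      · intro hv
        have : u = ⟨u.val, hv⟩ := Subtype.ext rfl
        rw [← this]
        exact .refl u
      · intro hv
        exact absurd hv u.2
    | tail e he hvw h ih =>
      rename_i v y
      constructor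
      · intro hy
        by_cases hvw' : v = w
        · have he0 : e = f₀ := huniq e (by rw [hvw]; exact Sym2.mem_iff.2 (Or.inl hvw'.symm))
          have hswz : s(v, y) = s(w, z) := by rw [← hvw, he0, hf₀]
          rw [Sym2.eq_iff] at hswz
          rcases hswz with ⟨h1, h2⟩ | ⟨h1, h2⟩
          · have : (⟨y, hy⟩ : {x // x ≠ w}) = j₀ := Subtype.ext h2
            rw [this]
            exact ih.2 hvw'
          · exact absurd h2 hy
        · have hew : w ∉ G.ends e := by
            intro hmem
            have h4 := huniq e hmem
            rw [h4, hf₀] at hvw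
            rw [Sym2.eq_iff] at hvw
            rcases hvw with ⟨h1, _⟩ | ⟨h1, _⟩
            · exact hvw' h1.symm
            · exact hy h1.symm
          have hstep : (G.gdel w j₀).ends ⟨e, hew⟩ = s(⟨v, hvw'⟩, ⟨y, hy⟩) := by
            obtain ⟨hx', hy', hm⟩ := gdel_ends (j₀ := j₀) (e := ⟨e, hew⟩) hvw
            exact hm
          exact .tail ⟨e, hew⟩ (by simp) hstep (ih.1 hvw')
      · intro hyw
        have he0 : e = f₀ := huniq e (by rw [hvw]; exact Sym2.mem_iff.2 (Or.inr hyw.symm))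
        have hswz : s(v, y) = s(w, z) := by rw [← hvw, he0, hf₀]
        rw [Sym2.eq_iff] at hswz
        rcases hswz with ⟨h1, h2⟩ | ⟨h1, h2⟩
        · exact absurd (h2.symm.trans hyw) hz
        · have hvne : v ≠ w := by rw [h1]; exact hz
          have := ih.1 hvne
          have heq : (⟨v, hvne⟩ : {x // x ≠ w}) = j₀ := Subtype.ext h1
          rwa [heq] at this
  intro a b
  exact (main a b.val (hconn a.val b.val)).1 b.2

/-- a finite multigraph with no simple cycle has fewer edges than vertices. -/
theorem forest_bound : ∀ (N : ℕ) {V E : Type} [Fintype V] [Fintype E] [DecidableEq V]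
    (G : Multigraph V E), Fintype.card E = N → Nonempty V → G.NoFCycle →
    Fintype.card E < Fintype.card V := by
  intro N
  induction N using Nat.strong_induction_on with
  | _ N IH =>
    intro V E _ _ _ G hN hV hnc
    classical
    rcases Nat.eq_zero_or_pos (Fintype.card E) with h0 | hpos
    · rw [h0]
      exact Fintype.card_pos_iff.2 hV
    · obtain ⟨e₀⟩ : Nonempty E := Fintype.card_pos_iff.1 hpos
      obtain ⟨w, hw⟩ := exists_degree_one hnc e₀
      obtain ⟨f₀, hmem, huniq, hmul⟩ := unique_incident hw
      obtain ⟨x0, hx0s⟩ := ends_eq_of_mem hmem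
      have hx0 : x0 ≠ w := (hnc.no_loop hx0s).symm
      have hcard_inc : Fintype.card {e : E // w ∈ G.ends e} = 1 :=
        Fintype.card_eq_one_iff.2 ⟨⟨f₀, hmem⟩, fun b => Subtype.ext (huniq b.1 b.2)⟩
      have hcard_e : Fintype.card {e : E // w ∉ G.ends e} = Fintype.card E - 1 := by
        rw [Fintype.card_subtype_compl, hcard_inc]
      have hcard_v : Fintype.card {x : V // x ≠ w} = Fintype.card V - 1 := by
        rw [Fintype.card_subtype_compl, Fintype.card_subtype_eq]
      have hVne : Nonempty {x : V // x ≠ w} := ⟨⟨x0, hx0⟩⟩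
      have hV2 : 1 ≤ Fintype.card V := Fintype.card_pos_iff.2 ⟨w⟩
      have hrec := IH (Fintype.card E - 1) (by omega) (G.gdel w ⟨x0, hx0⟩) hcard_e hVne
        (gdel_noFCycle hnc)
      rw [hcard_e, hcard_v] at hrec
      have hV2' : 2 ≤ Fintype.card V := by
        have : x0 ≠ w := hx0
        have := Fintype.one_lt_card_iff_nontrivial.2 ⟨x0, w, this⟩
        omega
      omega

/-- a finite tree has exactly one fewer edge than vertices. -/
theorem tree_count : ∀ (N : ℕ) {V E : Type} [Fintype V] [Fintype E] [DecidableEq V]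
    (G : Multigraph V E), Fintype.card V = N → G.Connected → G.NoFCycle →
    Nonempty V → Fintype.card E + 1 = Fintype.card V := by
  intro N
  induction N using Nat.strong_induction_on with
  | _ N IH =>
    intro V E _ _ _ G hN hconn hnc hV
    classical
    rcases le_or_gt (Fintype.card V) 1 with h1 | h1
    · -- single vertex: no edges (any edge would be a loop)
      have hV1 : Fintype.card V = 1 := le_antisymm h1 (Fintype.card_pos_iff.2 hV)
      have hE0 : Fintype.card E = 0 := by
        rw [Fintype.card_eq_zero_iff]
        constructor
        intro e
        obtain ⟨x, y, hxy⟩ := sym2_rep (G.ends e)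
        have hnl := hnc.no_loop hxy
        have hsub : Subsingleton V := Fintype.card_le_one_iff_subsingleton.1 h1
        exact hnl (Subsingleton.elim x y)
      omega
    · -- at least two vertices
      obtain ⟨u, v, huv⟩ := Fintype.one_lt_card_iff_nontrivial.1 h1
      have hEne : Nonempty E := by
        rcases exists_edge_at_start (hconn u v) with h | ⟨e, _⟩
        · exact absurd h huv
        · exact ⟨e⟩
      obtain ⟨e₀⟩ := hEne
      obtain ⟨w, hw⟩ := exists_degree_one hnc e₀
      obtain ⟨f₀, hmem, huniq, hmul⟩ := unique_incident hw
      obtain ⟨x0, hx0s⟩ := ends_eq_of_mem hmem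
      have hx0 : x0 ≠ w := (hnc.no_loop hx0s).symm
      have hcard_inc : Fintype.card {e : E // w ∈ G.ends e} = 1 :=
        Fintype.card_eq_one_iff.2 ⟨⟨f₀, hmem⟩, fun b => Subtype.ext (huniq b.1 b.2)⟩
      have hcard_e : Fintype.card {e : E // w ∉ G.ends e} = Fintype.card E - 1 := by
        rw [Fintype.card_subtype_compl, hcard_inc]
      have hcard_v : Fintype.card {x : V // x ≠ w} = Fintype.card V - 1 := by
        rw [Fintype.card_subtype_compl, Fintype.card_subtype_eq]
      have hconn' := gdel_connected hconn hx0 hx0s huniq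
      have hrec := IH (Fintype.card V - 1) (by omega) (G.gdel w ⟨x0, hx0⟩) hcard_v hconn'
        (gdel_noFCycle hnc) ⟨⟨x0, hx0⟩⟩
      rw [hcard_e, hcard_v] at hrec
      have hE1 : 1 ≤ Fintype.card E := Fintype.card_pos_iff.2 ⟨e₀⟩
      omega

end Multigraph

open Finset in
lemma two_le_changes {k : ℕ} [NeZero k] (f : Fin k → Bool) {i j : Fin k} (hij : f i ≠ f j) :
    2 ≤ (Finset.univ.filter fun i : Fin k => f i ≠ f (i + 1)).card := by
  classical
  set D := Finset.univ.filter (fun i : Fin k => f i ≠ f (i + 1)) with hD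
  have hkpos : 0 < k := Nat.pos_of_ne_zero (NeZero.ne k)
  have hstep : ∀ (a : Fin k), a ∉ D → f (a + 1) = f a := by
    intro a ha
    by_contra hc
    exact ha (Finset.mem_filter.2 ⟨Finset.mem_univ _, fun h => hc h.symm⟩)
  have hnonempty : D.Nonempty := by
    by_contra hc
    rw [Finset.not_nonempty_iff_eq_empty] at hc
    have hconst : ∀ (d : ℕ) (a : Fin k), f (a + (d : Fin k)) = f a := by
      intro d
      induction d with
      | zero => intro a; simp
      | succ d ihd =>
        intro a
        have h1 : (a + ((d+1 : ℕ) : Fin k)) = (a + (d : Fin k)) + 1 := by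
          push_cast; ring
        rw [h1, hstep _ (by simp [hc]), ihd]
    have hcc := hconst ((j - i : Fin k) : ℕ) i
    rw [Fin.cast_val_eq_self] at hcc
    have hji : i + (j - i) = j := by ring
    rw [hji] at hcc
    exact hij hcc.symm
  obtain ⟨a, ha⟩ := hnonempty
  by_contra hlt
  push_neg at hlt
  have hDsub : ∀ b ∈ D, b = a := fun b hb => Finset.card_le_one.1 (by omega) b hb a ha
  have hconst : ∀ d : ℕ, d ≤ k - 1 → f (a + 1 + (d : Fin k)) = f (a + 1) := by
    intro d hd
    induction d with
    | zero => simp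
    | succ d ihd =>
      have hd' : d ≤ k - 1 := by omega
      have hne : a + 1 + (d : Fin k) ∉ D := by
        intro hmemD
        have hcon := hDsub _ hmemD
        have h5 : a + ((1 : Fin k) + (d : Fin k)) = a + 0 := by
          rw [← add_assoc, add_zero]; exact hcon
        have hcl : (1 : Fin k) + (d : Fin k) = 0 := add_left_cancel h5
        have hcast : (((1 + d : ℕ)) : Fin k) = 0 := by push_cast; exact hcl
        have hval := congrArg Fin.val hcast
        rw [Fin.val_natCast, Fin.val_zero] at hval
        rw [Nat.mod_eq_of_lt (by omega)] at hval
        omega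
      have h1 : (a + 1 + ((d+1 : ℕ) : Fin k)) = (a + 1 + (d : Fin k)) + 1 := by
        push_cast; ring
      rw [h1, hstep _ hne, ihd hd']
  have hfin : f a = f (a + 1) := by
    have hcc := hconst (k - 1) le_rfl
    have h2 : a + 1 + ((k - 1 : ℕ) : Fin k) = a := by
      have h3 : (1 : Fin k) + ((k - 1 : ℕ) : Fin k) = 0 := by
        have h4 : ((1 : ℕ) : Fin k) + ((k-1 : ℕ) : Fin k) = ((1 + (k-1) : ℕ) : Fin k) :=
          (Nat.cast_add _ _).symm
        rw [show (1 : Fin k) = ((1 : ℕ) : Fin k) from (Nat.cast_one).symm, h4,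
          show 1 + (k-1) = k from by omega, Fin.natCast_self]
      rw [add_assoc, h3, add_zero]
    rw [h2] at hcc
    exact hcc
  rw [Finset.mem_filter] at ha
  exact ha.2 hfin



/-- cyclic successor on `Fin n` without a `NeZero` instance. -/
def fsucc {n : ℕ} (i : Fin n) : Fin n := i + ⟨1 % n, Nat.mod_lt 1 i.pos⟩

lemma fsucc_eq {n : ℕ} [NeZero n] (i : Fin n) : fsucc i = i + 1 := by
  have h : (⟨1 % n, Nat.mod_lt 1 i.pos⟩ : Fin n) = 1 := by
    apply Fin.ext
    rw [Fin.val_one']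
  rw [fsucc, h]

/-- Let `t, t'` be finite trees with designated roots `ρ, ρ'` of degree
one, each with at least two vertices, and let `T` be the graph obtained by identifying
`ρ` with `ρ'`.  If `π` is a solid partition of the vertices of `T` whose quotient `T^π`
is a cactus, then every leaf `v ≠ ρ` of `t` lies in the same block of `π` as some leaf
`v' ≠ ρ'` of `t'`, and (with the convention `ρ ↔ ρ'`) `π` induces a bijection between
the leaves of `t` and the leaves of `t'`. -/
theorem stmt_9 {V E V' E' : Type} [Fintype V] [Fintype V'] [Fintype E] [Fintype E']
    [DecidableEq V] [DecidableEq V'] [DecidableEq E] [DecidableEq E']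
    (t : Multigraph V E) (t' : Multigraph V' E') (ρ : V) (ρ' : V')
    (ht : t.IsTree) (ht' : t'.IsTree)
    (hV : 1 < Fintype.card V) (hV' : 1 < Fintype.card V')
    (hρ : t.degree ρ = 1) (hρ' : t'.degree ρ' = 1)
    (σ : Setoid (V ⊕ {x : V' // x ≠ ρ'}))
    (hsolid₁ : ∀ a b : V, σ.r (Sum.inl a) (Sum.inl b) → a = b)
    (hsolid₂ : ∀ a b : V', σ.r (wedgeJ ρ ρ' a) (wedgeJ ρ ρ' b) → a = b)
    (hcactus : ((t.wedge t' ρ ρ').quot σ).IsCactus) :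
    (∀ v : V, t.IsLeaf v → v ≠ ρ →
        ∃ v' : V', t'.IsLeaf v' ∧ v' ≠ ρ' ∧ σ.r (Sum.inl v) (wedgeJ ρ ρ' v')) ∧
    (∀ v : V, t.IsLeaf v → ∃! v' : V', t'.IsLeaf v' ∧ σ.r (Sum.inl v) (wedgeJ ρ ρ' v')) ∧
    (∀ v' : V', t'.IsLeaf v' → ∃! v : V, t.IsLeaf v ∧ σ.r (Sum.inl v) (wedgeJ ρ ρ' v')) := by
  classical
  set Q : Multigraph (Quotient σ) (E ⊕ E') := (t.wedge t' ρ ρ').quot σ with hQ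
  -- basic solidity facts in quotient form
  have hqeq : ∀ a b : V ⊕ {x : V' // x ≠ ρ'},
      Quotient.mk σ a = Quotient.mk σ b ↔ σ.r a b :=
    fun a b => ⟨fun h => Quotient.exact h, fun h => Quotient.sound h⟩
  have hwJr : wedgeJ ρ ρ' ρ' = Sum.inl ρ := by simp [wedgeJ]
  have hwJn : ∀ (x : V') (hx : x ≠ ρ'), wedgeJ ρ ρ' x = Sum.inr ⟨x, hx⟩ :=
    fun x hx => by simp [wedgeJ, hx]
  have hqL : ∀ a b : V, Quotient.mk σ (Sum.inl a) = Quotient.mk σ (Sum.inl b) ↔ a = b :=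
    fun a b => ⟨fun h => hsolid₁ a b ((hqeq _ _).1 h), fun h => by rw [h]⟩
  have hqR : ∀ a b : V',
      Quotient.mk σ (wedgeJ ρ ρ' a) = Quotient.mk σ (wedgeJ ρ ρ' b) ↔ a = b :=
    fun a b => ⟨fun h => hsolid₂ a b ((hqeq _ _).1 h), fun h => by rw [h]⟩
  -- ends of quotient edges
  have hendsL : ∀ (e : E) {x y : V}, t.ends e = s(x, y) →
      Q.ends (Sum.inl e) = s(Quotient.mk σ (Sum.inl x), Quotient.mk σ (Sum.inl y)) := by
    intro e x y h
    rw [hQ]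
    have h1 : ((t.wedge t' ρ ρ').quot σ).ends (Sum.inl e) =
        ((t.ends e).map Sum.inl).map (Quotient.mk σ) := rfl
    rw [h1, h, Sym2.map_pair_eq, Sym2.map_pair_eq]
  have hendsR : ∀ (f : E') {x y : V'}, t'.ends f = s(x, y) →
      Q.ends (Sum.inr f) =
        s(Quotient.mk σ (wedgeJ ρ ρ' x), Quotient.mk σ (wedgeJ ρ ρ' y)) := by
    intro f x y h
    rw [hQ]
    have h1 : ((t.wedge t' ρ ρ').quot σ).ends (Sum.inr f) =
        ((t'.ends f).map (wedgeJ ρ ρ')).map (Quotient.mk σ) := rfl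
    rw [h1, h, Sym2.map_pair_eq, Sym2.map_pair_eq]
  -- trees have no cycles
  have hnct : t.NoFCycle := Multigraph.noFCycle_of_no_cycles ht.2
  have hnct' : t'.NoFCycle := Multigraph.noFCycle_of_no_cycles ht'.2
  have htc : Fintype.card E + 1 = Fintype.card V :=
    Multigraph.tree_count (Fintype.card V) t rfl ht.1 hnct ⟨ρ⟩
  have htc' : Fintype.card E' + 1 = Fintype.card V' :=
    Multigraph.tree_count (Fintype.card V') t' rfl ht'.1 hnct' ⟨ρ'⟩
  have hdegpos : ∀ u : V, 0 < t.degree u := Multigraph.degree_pos ht.1 hV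
  have hdegpos' : ∀ u : V', 0 < t'.degree u := Multigraph.degree_pos ht'.1 hV'
  -- incidence counts at a block from each side
  set atB : Quotient σ → ℕ := fun B => ∑ e : E, Q.mult (Sum.inl e) B with hatB
  set btB : Quotient σ → ℕ := fun B => ∑ f : E', Q.mult (Sum.inr f) B with hbtB
  have hdeg : ∀ B, Q.degree B = atB B + btB B := by
    intro B
    simp only [hatB, hbtB]
    rw [Multigraph.degree_eq_sum_mult, Fintype.sum_sum_type]
  have hat_inl : ∀ u : V, atB (Quotient.mk σ (Sum.inl u)) = t.degree u := by
    intro u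
    simp only [hatB]
    rw [Multigraph.degree_eq_sum_mult]
    apply Finset.sum_congr rfl
    intro e _
    obtain ⟨x, y, hxy⟩ := sym2_rep (t.ends e)
    rw [Multigraph.mult_eq (hendsL e hxy), Multigraph.mult_eq hxy]
    congr 1
    · by_cases h : x = u
      · rw [if_pos ((hqL x u).2 h), if_pos h]
      · rw [if_neg (fun hc => h ((hqL x u).1 hc)), if_neg h]
    · by_cases h : y = u
      · rw [if_pos ((hqL y u).2 h), if_pos h]
      · rw [if_neg (fun hc => h ((hqL y u).1 hc)), if_neg h]
  have hbt_wJ : ∀ u : V', btB (Quotient.mk σ (wedgeJ ρ ρ' u)) = t'.degree u := by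
    intro u
    simp only [hbtB]
    rw [Multigraph.degree_eq_sum_mult]
    apply Finset.sum_congr rfl
    intro f _
    obtain ⟨x, y, hxy⟩ := sym2_rep (t'.ends f)
    rw [Multigraph.mult_eq (hendsR f hxy), Multigraph.mult_eq hxy]
    congr 1
    · by_cases h : x = u
      · rw [if_pos ((hqR x u).2 h), if_pos h]
      · rw [if_neg (fun hc => h ((hqR x u).1 hc)), if_neg h]
    · by_cases h : y = u
      · rw [if_pos ((hqR y u).2 h), if_pos h]
      · rw [if_neg (fun hc => h ((hqR y u).1 hc)), if_neg h]
  have hat_pos_rep : ∀ B, 0 < atB B → ∃ u : V, Quotient.mk σ (Sum.inl u) = B := by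
    intro B hpos
    simp only [hatB] at hpos
    have hex : ∃ e : E, 0 < Q.mult (Sum.inl e) B := by
      by_contra hc
      push_neg at hc
      simp only [Nat.le_zero] at hc
      rw [Finset.sum_eq_zero (fun e _ => hc e)] at hpos
      omega
    obtain ⟨e, he⟩ := hex
    have hmem := Multigraph.mem_of_mult_pos he
    obtain ⟨x, y, hxy⟩ := sym2_rep (t.ends e)
    rw [hendsL e hxy, Sym2.mem_iff] at hmem
    rcases hmem with h | h
    · exact ⟨x, h.symm⟩
    · exact ⟨y, h.symm⟩
  have hbt_pos_rep : ∀ B, 0 < btB B → ∃ u : V', Quotient.mk σ (wedgeJ ρ ρ' u) = B := by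
    intro B hpos
    simp only [hbtB] at hpos
    have hex : ∃ f : E', 0 < Q.mult (Sum.inr f) B := by
      by_contra hc
      push_neg at hc
      simp only [Nat.le_zero] at hc
      rw [Finset.sum_eq_zero (fun f _ => hc f)] at hpos
      omega
    obtain ⟨f, hf⟩ := hex
    have hmem := Multigraph.mem_of_mult_pos hf
    obtain ⟨x, y, hxy⟩ := sym2_rep (t'.ends f)
    rw [hendsR f hxy, Sym2.mem_iff] at hmem
    rcases hmem with h | h
    · exact ⟨x, h.symm⟩
    · exact ⟨y, h.symm⟩
  have hB_pos : ∀ B, 0 < atB B + btB B := by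
    intro B
    induction B using Quotient.ind with
    | _ w =>
      rcases w with u | v
      · have h1 := hat_inl u
        have h2 := hdegpos u
        omega
      · have h1 : btB (Quotient.mk σ (Sum.inr v)) = t'.degree v.1 := by
          have h := hbt_wJ v.1
          rwa [hwJn v.1 v.2] at h
        have h2 := hdegpos' v.1
        omega
  -- the finset of simple cycles
  set 𝒞 : Finset (Finset (E ⊕ E')) :=
    Finset.univ.filter (fun S => Q.IsSimpleCycleOn S) with hC
  have hCmem : ∀ S, S ∈ 𝒞 ↔ Q.IsSimpleCycleOn S := by
    intro S
    rw [hC, Finset.mem_filter]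
    simp
  have huniqC : ∀ (e : E ⊕ E') (S S' : Finset (E ⊕ E')), S ∈ 𝒞 → S' ∈ 𝒞 →
      e ∈ S → e ∈ S' → S = S' := by
    intro e S S' hS hS' heS heS'
    obtain ⟨U, _, hU⟩ := hcactus.2 e
    rw [hU S ⟨(hCmem S).1 hS, heS⟩, hU S' ⟨(hCmem S').1 hS', heS'⟩]
  have hcoverC : ∀ e : E ⊕ E', ∃ S ∈ 𝒞, e ∈ S := by
    intro e
    obtain ⟨U, ⟨hU1, hU2⟩, _⟩ := hcactus.2 e
    exact ⟨U, (hCmem U).2 hU1, hU2⟩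
  -- choose functional cycle data
  have hdata : ∀ x : {S // S ∈ 𝒞}, ∃ (k : ℕ) (_ : NeZero k) (es : Fin k → E ⊕ E')
      (vs : Fin k → Quotient σ), Q.IsFCycle es vs ∧ Finset.image es Finset.univ = x.1 :=
    fun x => Multigraph.exists_fcycle_of_isSimpleCycleOn ((hCmem x.1).1 x.2)
  choose kk hkk ess vss hfc himg using hdata
  have hkkpos : ∀ x, 0 < kk x := fun x => Nat.pos_of_ne_zero ((hkk x).ne)
  have hess_inj : ∀ x, Function.Injective (ess x) := fun x => (hfc x).1
  have hvss_inj : ∀ x, Function.Injective (vss x) := fun x => (hfc x).2.1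
  have hends_x : ∀ x (i : Fin (kk x)), Q.ends (ess x i) = s(vss x i, vss x (fsucc i)) := by
    intro x i
    haveI := hkk x
    rw [fsucc_eq]
    exact (hfc x).2.2 i
  have hess_mem : ∀ x (i : Fin (kk x)), ess x i ∈ x.1 := by
    intro x i
    rw [← himg x]
    exact Finset.mem_image.2 ⟨i, Finset.mem_univ i, rfl⟩
  -- partition of the edges by the cycles
  have hsum_partition : ∀ g : E ⊕ E' → ℕ,
      ∑ e : E ⊕ E', g e = ∑ x ∈ 𝒞.attach, ∑ i : Fin (kk x), g (ess x i) := by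
    intro g
    have hdisj : (↑𝒞 : Set (Finset (E ⊕ E'))).PairwiseDisjoint id := by
      intro S hS S' hS' hne
      simp only [Function.onFun, id]
      rw [Finset.disjoint_left]
      intro e heS heS'
      exact hne (huniqC e S S' hS hS' heS heS')
    have hcover : 𝒞.biUnion id = Finset.univ := by
      apply Finset.eq_univ_of_forall
      intro e
      obtain ⟨S, hS, heS⟩ := hcoverC e
      exact Finset.mem_biUnion.2 ⟨S, hS, heS⟩
    calc ∑ e : E ⊕ E', g e = ∑ e ∈ 𝒞.biUnion id, g e := by rw [hcover]
    _ = ∑ S ∈ 𝒞, ∑ e ∈ S, g e := Finset.sum_biUnion hdisj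
    _ = ∑ x ∈ 𝒞.attach, ∑ e ∈ x.1, g e := (Finset.sum_attach _ _).symm
    _ = ∑ x ∈ 𝒞.attach, ∑ i : Fin (kk x), g (ess x i) := by
        apply Finset.sum_congr rfl
        intro x _
        rw [← himg x]
        exact Finset.sum_image (fun i _ j _ h => hess_inj x h)
  -- every block has even degree
  have hdegeven : ∀ B, Even (atB B + btB B) := by
    intro B
    rw [← hdeg B, Multigraph.degree_eq_sum_mult, hsum_partition (fun e => Q.mult e B)]
    refine Finset.sum_induction _ Even (fun a b ha hb => ha.add hb) Even.zero ?_
    intro x _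
    have hterm : ∀ i : Fin (kk x), Q.mult (ess x i) B =
        (if vss x i = B then 1 else 0) + (if vss x (fsucc i) = B then 1 else 0) :=
      fun i => Multigraph.mult_eq (hends_x x i) B
    rw [Finset.sum_congr rfl (fun i _ => hterm i), Finset.sum_add_distrib]
    have hre : (∑ i : Fin (kk x), if vss x (fsucc i) = B then 1 else 0) =
        ∑ i : Fin (kk x), if vss x i = B then 1 else 0 := by
      haveI := hkk x
      have h1 : ∀ i : Fin (kk x), (if vss x (fsucc i) = B then (1:ℕ) else 0) =
          (fun j => if vss x j = B then (1:ℕ) else 0) ((Equiv.addRight (1 : Fin (kk x))) i) := by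
        intro i
        rw [fsucc_eq]
        rfl
      rw [Finset.sum_congr rfl (fun i _ => h1 i)]
      exact Equiv.sum_comp (Equiv.addRight (1 : Fin (kk x))) (fun j => if vss x j = B then (1:ℕ) else 0)
    rw [hre]
    exact ⟨_, rfl⟩
  -- color change counting
  set isL : E ⊕ E' → Bool := Sum.isLeft with hisL
  set chg : {S // S ∈ 𝒞} → ℕ := fun x =>
    (Finset.univ.filter fun i : Fin (kk x) => isL (ess x i) ≠ isL (ess x (fsucc i))).card
    with hchg
  set cAt : Quotient σ → {S // S ∈ 𝒞} → ℕ := fun B x =>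
    (Finset.univ.filter fun i : Fin (kk x) =>
      (isL (ess x i) ≠ isL (ess x (fsucc i))) ∧ vss x (fsucc i) = B).card with hcAt
  have h_two : ∀ x, 2 ≤ chg x := by
    intro x
    haveI := hkk x
    have hex : ∃ i j : Fin (kk x), isL (ess x i) ≠ isL (ess x j) := by
      by_contra hc
      push_neg at hc
      set i₀ : Fin (kk x) := ⟨0, hkkpos x⟩ with hi₀
      cases hcol : isL (ess x i₀) with
      | false =>
        have hall : ∀ i, ∃ b : E', ess x i = Sum.inr b := by
          intro i
          have h1 : isL (ess x i) = false := (hc i i₀).trans hcol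
          cases h : ess x i with
          | inl a => rw [h] at h1; simp [hisL] at h1
          | inr b => exact ⟨b, rfl⟩
        choose b hb using hall
        have hcomp : ∀ i, ∃ p : V' × V', t'.ends (b i) = s(p.1, p.2) ∧
            Quotient.mk σ (wedgeJ ρ ρ' p.1) = vss x i ∧
            Quotient.mk σ (wedgeJ ρ ρ' p.2) = vss x (fsucc i) := by
          intro i
          obtain ⟨xx, yy, hxy⟩ := sym2_rep (t'.ends (b i))
          have h2 := hends_x x i
          rw [hb i, hendsR (b i) hxy] at h2
          rw [Sym2.eq_iff] at h2
          rcases h2 with ⟨h3, h4⟩ | ⟨h3, h4⟩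
          · exact ⟨(xx, yy), hxy, h3, h4⟩
          · exact ⟨(yy, xx), hxy.trans Sym2.eq_swap, h4, h3⟩
        choose pp hpp h1p h2p using hcomp
        have hglue : ∀ i, (pp (fsucc i)).1 = (pp i).2 :=
          fun i => (hqR _ _).1 ((h1p (fsucc i)).trans (h2p i).symm)
        apply hnct' (kk x) (hkk x) b (fun i => (pp i).1)
        refine ⟨?_, ?_, ?_⟩
        · intro i j hij
          apply hess_inj x
          rw [hb i, hb j, hij]
        · intro i j hij
          have hij' : (pp i).1 = (pp j).1 := hij
          apply hvss_inj x
          rw [← h1p i, ← h1p j, hij']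
        · intro i
          have hg := hglue i
          rw [fsucc_eq] at hg
          show t'.ends (b i) = s((pp i).1, (pp (i+1)).1)
          rw [hpp i, hg]
      | true =>
        have hall : ∀ i, ∃ a : E, ess x i = Sum.inl a := by
          intro i
          have h1 : isL (ess x i) = true := (hc i i₀).trans hcol
          cases h : ess x i with
          | inl a => exact ⟨a, rfl⟩
          | inr b => rw [h] at h1; simp [hisL] at h1
        choose a ha using hall
        have hcomp : ∀ i, ∃ p : V × V, t.ends (a i) = s(p.1, p.2) ∧
            Quotient.mk σ (Sum.inl p.1) = vss x i ∧
            Quotient.mk σ (Sum.inl p.2) = vss x (fsucc i) := by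
          intro i
          obtain ⟨xx, yy, hxy⟩ := sym2_rep (t.ends (a i))
          have h2 := hends_x x i
          rw [ha i, hendsL (a i) hxy] at h2
          rw [Sym2.eq_iff] at h2
          rcases h2 with ⟨h3, h4⟩ | ⟨h3, h4⟩
          · exact ⟨(xx, yy), hxy, h3, h4⟩
          · exact ⟨(yy, xx), hxy.trans Sym2.eq_swap, h4, h3⟩
        choose pp hpp h1p h2p using hcomp
        have hglue : ∀ i, (pp (fsucc i)).1 = (pp i).2 :=
          fun i => (hqL _ _).1 ((h1p (fsucc i)).trans (h2p i).symm)
        apply hnct (kk x) (hkk x) a (fun i => (pp i).1)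
        refine ⟨?_, ?_, ?_⟩
        · intro i j hij
          apply hess_inj x
          rw [ha i, ha j, hij]
        · intro i j hij
          have hij' : (pp i).1 = (pp j).1 := hij
          apply hvss_inj x
          rw [← h1p i, ← h1p j, hij']
        · intro i
          have hg := hglue i
          rw [fsucc_eq] at hg
          show t.ends (a i) = s((pp i).1, (pp (i+1)).1)
          rw [hpp i, hg]
    obtain ⟨i, j, hij⟩ := hex
    have h2 := two_le_changes (fun i => isL (ess x i)) hij
    simp only [hchg]
    have hfilter : (Finset.univ.filter fun i : Fin (kk x) =>
        isL (ess x i) ≠ isL (ess x (fsucc i))) =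
        (Finset.univ.filter fun i : Fin (kk x) => isL (ess x i) ≠ isL (ess x (i+1))) := by
      apply Finset.filter_congr
      intro i _
      rw [fsucc_eq]
    rw [hfilter]
    exact h2
  have hchg_split : ∀ x, chg x = ∑ B : Quotient σ, cAt B x := by
    intro x
    simp only [hchg, hcAt]
    rw [Finset.card_eq_sum_card_fiberwise
      (f := fun i : Fin (kk x) => vss x (fsucc i)) (t := Finset.univ)
      (fun i _ => Finset.mem_univ _)]
    apply Finset.sum_congr rfl
    intro B _
    rw [Finset.filter_filter]
  have hcAt_le_at : ∀ B, (∑ x ∈ 𝒞.attach, cAt B x) ≤ atB B := by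
    intro B
    have htgt : (Finset.univ.filter fun a : E => B ∈ Q.ends (Sum.inl a)).card ≤ atB B := by
      simp only [hatB]
      calc (Finset.univ.filter fun a : E => B ∈ Q.ends (Sum.inl a)).card
          = ∑ a ∈ Finset.univ.filter (fun a : E => B ∈ Q.ends (Sum.inl a)), 1 := by
            rw [Finset.card_eq_sum_ones]
        _ ≤ ∑ a ∈ Finset.univ.filter (fun a : E => B ∈ Q.ends (Sum.inl a)),
              Q.mult (Sum.inl a) B :=
            Finset.sum_le_sum (fun a ha => Multigraph.mult_pos (Finset.mem_filter.1 ha).2)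
        _ ≤ ∑ a : E, Q.mult (Sum.inl a) B :=
            Finset.sum_le_sum_of_subset (Finset.filter_subset _ _)
    have hsig : (∑ x ∈ 𝒞.attach, cAt B x) =
        (𝒞.attach.sigma (fun x => Finset.univ.filter fun i : Fin (kk x) =>
          (isL (ess x i) ≠ isL (ess x (fsucc i))) ∧ vss x (fsucc i) = B)).card := by
      rw [Finset.card_sigma]
    rw [hsig]
    refine le_trans ?_ htgt
    rcases isEmpty_or_nonempty E with hE | hE
    · have hempty : (𝒞.attach.sigma (fun x => Finset.univ.filter fun i : Fin (kk x) =>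
          (isL (ess x i) ≠ isL (ess x (fsucc i))) ∧ vss x (fsucc i) = B)) = ∅ := by
        apply Finset.eq_empty_of_forall_notMem
        rintro ⟨x, i⟩ hz
        rw [Finset.mem_sigma, Finset.mem_filter] at hz
        obtain ⟨-, -, hdiff, -⟩ := hz
        cases h1 : ess x i with
        | inl a => exact hE.false a
        | inr b =>
          cases h2 : ess x (fsucc i) with
          | inl a => exact hE.false a
          | inr b2 => rw [h1, h2] at hdiff; simp [hisL] at hdiff
      rw [hempty]
      simp
    · obtain ⟨a₀⟩ := hE
      set φ : (Σ x : {S // S ∈ 𝒞}, Fin (kk x)) → E := fun z =>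
        Sum.elim id (fun _ => Sum.elim id (fun _ => a₀) (ess z.1 (fsucc z.2))) (ess z.1 z.2)
        with hφ
      have hφ1 : ∀ (z : Σ x : {S // S ∈ 𝒞}, Fin (kk x)) (a : E),
          ess z.1 z.2 = Sum.inl a → φ z = a := by
        intro z a h
        simp only [hφ, h, Sum.elim_inl, id]
      have hφ2 : ∀ (z : Σ x : {S // S ∈ 𝒞}, Fin (kk x)) (b : E') (a : E),
          ess z.1 z.2 = Sum.inr b → ess z.1 (fsucc z.2) = Sum.inl a → φ z = a := by
        intro z b a h1 h2
        simp only [hφ, h1, h2, Sum.elim_inr, Sum.elim_inl, id]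
      have hinl : ∀ (z : Σ x : {S // S ∈ 𝒞}, Fin (kk x)),
          isL (ess z.1 z.2) ≠ isL (ess z.1 (fsucc z.2)) →
          Sum.inl (φ z) = ess z.1 z.2 ∨ Sum.inl (φ z) = ess z.1 (fsucc z.2) := by
        intro z hdiff
        cases h1 : ess z.1 z.2 with
        | inl a => exact Or.inl (by rw [hφ1 z a h1])
        | inr b =>
          cases h2 : ess z.1 (fsucc z.2) with
          | inl a => exact Or.inr (by rw [hφ2 z b a h1 h2])
          | inr b2 => exfalso; rw [h1, h2] at hdiff; simp [hisL] at hdiff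
      apply Finset.card_le_card_of_injOn φ
      · rintro ⟨x, i⟩ hz
        rw [Finset.mem_coe, Finset.mem_sigma, Finset.mem_filter] at hz
        obtain ⟨-, -, hdiff, hjB⟩ := hz
        rw [Finset.mem_coe, Finset.mem_filter]
        refine ⟨Finset.mem_univ _, ?_⟩
        rcases hinl ⟨x, i⟩ hdiff with h | h
        · rw [h, hends_x x i, ← hjB]
          exact Sym2.mem_iff.2 (Or.inr rfl)
        · rw [h, hends_x x (fsucc i), ← hjB]
          exact Sym2.mem_iff.2 (Or.inl rfl)
      · rintro ⟨x, i⟩ hz ⟨x', i'⟩ hz' heq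
        rw [Finset.mem_coe, Finset.mem_sigma, Finset.mem_filter] at hz hz'
        obtain ⟨-, -, hdiff, hjB⟩ := hz
        obtain ⟨-, -, hdiff', hjB'⟩ := hz'
        have hmem1 : Sum.inl (φ ⟨x, i⟩) ∈ x.1 := by
          rcases hinl ⟨x, i⟩ hdiff with h | h
          · rw [h]; exact hess_mem x i
          · rw [h]; exact hess_mem x (fsucc i)
        have hmem2 : Sum.inl (φ ⟨x', i'⟩) ∈ x'.1 := by
          rcases hinl ⟨x', i'⟩ hdiff' with h | h
          · rw [h]; exact hess_mem x' i'
          · rw [h]; exact hess_mem x' (fsucc i')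
        rw [heq] at hmem1
        have hxx : x = x' := Subtype.ext (huniqC _ _ _ x.2 x'.2 hmem1 hmem2)
        subst hxx
        have hfs : fsucc i = fsucc i' := hvss_inj x (hjB.trans hjB'.symm)
        haveI := hkk x
        rw [fsucc_eq, fsucc_eq] at hfs
        have : i = i' := add_right_cancel hfs
        rw [this]
  have hcAt_le_bt : ∀ B, (∑ x ∈ 𝒞.attach, cAt B x) ≤ btB B := by
    intro B
    have htgt : (Finset.univ.filter fun b : E' => B ∈ Q.ends (Sum.inr b)).card ≤ btB B := by
      simp only [hbtB]
      calc (Finset.univ.filter fun b : E' => B ∈ Q.ends (Sum.inr b)).card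
          = ∑ b ∈ Finset.univ.filter (fun b : E' => B ∈ Q.ends (Sum.inr b)), 1 := by
            rw [Finset.card_eq_sum_ones]
        _ ≤ ∑ b ∈ Finset.univ.filter (fun b : E' => B ∈ Q.ends (Sum.inr b)),
              Q.mult (Sum.inr b) B :=
            Finset.sum_le_sum (fun b hb => Multigraph.mult_pos (Finset.mem_filter.1 hb).2)
        _ ≤ ∑ b : E', Q.mult (Sum.inr b) B :=
            Finset.sum_le_sum_of_subset (Finset.filter_subset _ _)
    have hsig : (∑ x ∈ 𝒞.attach, cAt B x) =
        (𝒞.attach.sigma (fun x => Finset.univ.filter fun i : Fin (kk x) =>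
          (isL (ess x i) ≠ isL (ess x (fsucc i))) ∧ vss x (fsucc i) = B)).card := by
      rw [Finset.card_sigma]
    rw [hsig]
    refine le_trans ?_ htgt
    rcases isEmpty_or_nonempty E' with hE | hE
    · have hempty : (𝒞.attach.sigma (fun x => Finset.univ.filter fun i : Fin (kk x) =>
          (isL (ess x i) ≠ isL (ess x (fsucc i))) ∧ vss x (fsucc i) = B)) = ∅ := by
        apply Finset.eq_empty_of_forall_notMem
        rintro ⟨x, i⟩ hz
        rw [Finset.mem_sigma, Finset.mem_filter] at hz
        obtain ⟨-, -, hdiff, -⟩ := hz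
        cases h1 : ess x i with
        | inr b => exact hE.false b
        | inl a =>
          cases h2 : ess x (fsucc i) with
          | inr b => exact hE.false b
          | inl a2 => rw [h1, h2] at hdiff; simp [hisL] at hdiff
      rw [hempty]
      simp
    · obtain ⟨b₀⟩ := hE
      set φ : (Σ x : {S // S ∈ 𝒞}, Fin (kk x)) → E' := fun z =>
        Sum.elim (fun _ => Sum.elim (fun _ => b₀) id (ess z.1 (fsucc z.2))) id (ess z.1 z.2)
        with hφ
      have hφ1 : ∀ (z : Σ x : {S // S ∈ 𝒞}, Fin (kk x)) (b : E'),
          ess z.1 z.2 = Sum.inr b → φ z = b := by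
        intro z b h
        simp only [hφ, h, Sum.elim_inr, id]
      have hφ2 : ∀ (z : Σ x : {S // S ∈ 𝒞}, Fin (kk x)) (a : E) (b : E'),
          ess z.1 z.2 = Sum.inl a → ess z.1 (fsucc z.2) = Sum.inr b → φ z = b := by
        intro z a b h1 h2
        simp only [hφ, h1, h2, Sum.elim_inl, Sum.elim_inr, id]
      have hinr : ∀ (z : Σ x : {S // S ∈ 𝒞}, Fin (kk x)),
          isL (ess z.1 z.2) ≠ isL (ess z.1 (fsucc z.2)) →
          Sum.inr (φ z) = ess z.1 z.2 ∨ Sum.inr (φ z) = ess z.1 (fsucc z.2) := by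
        intro z hdiff
        cases h1 : ess z.1 z.2 with
        | inr b => exact Or.inl (by rw [hφ1 z b h1])
        | inl a =>
          cases h2 : ess z.1 (fsucc z.2) with
          | inr b => exact Or.inr (by rw [hφ2 z a b h1 h2])
          | inl a2 => exfalso; rw [h1, h2] at hdiff; simp [hisL] at hdiff
      apply Finset.card_le_card_of_injOn φ
      · rintro ⟨x, i⟩ hz
        rw [Finset.mem_coe, Finset.mem_sigma, Finset.mem_filter] at hz
        obtain ⟨-, -, hdiff, hjB⟩ := hz
        rw [Finset.mem_coe, Finset.mem_filter]
        refine ⟨Finset.mem_univ _, ?_⟩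
        rcases hinr ⟨x, i⟩ hdiff with h | h
        · rw [h, hends_x x i, ← hjB]
          exact Sym2.mem_iff.2 (Or.inr rfl)
        · rw [h, hends_x x (fsucc i), ← hjB]
          exact Sym2.mem_iff.2 (Or.inl rfl)
      · rintro ⟨x, i⟩ hz ⟨x', i'⟩ hz' heq
        rw [Finset.mem_coe, Finset.mem_sigma, Finset.mem_filter] at hz hz'
        obtain ⟨-, -, hdiff, hjB⟩ := hz
        obtain ⟨-, -, hdiff', hjB'⟩ := hz'
        have hmem1 : Sum.inr (φ ⟨x, i⟩) ∈ x.1 := by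
          rcases hinr ⟨x, i⟩ hdiff with h | h
          · rw [h]; exact hess_mem x i
          · rw [h]; exact hess_mem x (fsucc i)
        have hmem2 : Sum.inr (φ ⟨x', i'⟩) ∈ x'.1 := by
          rcases hinr ⟨x', i'⟩ hdiff' with h | h
          · rw [h]; exact hess_mem x' i'
          · rw [h]; exact hess_mem x' (fsucc i')
        rw [heq] at hmem1
        have hxx : x = x' := Subtype.ext (huniqC _ _ _ x.2 x'.2 hmem1 hmem2)
        subst hxx
        have hfs : fsucc i = fsucc i' := hvss_inj x (hjB.trans hjB'.symm)
        haveI := hkk x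
        rw [fsucc_eq, fsucc_eq] at hfs
        have : i = i' := add_right_cancel hfs
        rw [this]
  -- forest bound : number of cycles is at least the cycle rank
  have hIneq1 : Fintype.card (E ⊕ E') + 1 ≤ Fintype.card (Quotient σ) + 𝒞.card := by
    set pick : {S // S ∈ 𝒞} → E ⊕ E' := fun x => ess x ⟨0, hkkpos x⟩ with hpick
    have hpickmem : ∀ x, pick x ∈ x.1 := fun x => hess_mem x _
    set F : Finset (E ⊕ E') := 𝒞.attach.image pick with hF
    have hFcard : F.card = 𝒞.card := by
      rw [hF, Finset.card_image_of_injOn, Finset.card_attach]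
      intro x _ y _ hxy
      have hmx := hpickmem x
      rw [hxy] at hmx
      exact Subtype.ext (huniqC (pick y) x.1 y.1 x.2 y.2 hmx (hpickmem y))
    set G₂ : Multigraph (Quotient σ) {e : E ⊕ E' // e ∉ F} := ⟨fun e => Q.ends e.val⟩ with hG₂
    have hG₂nc : G₂.NoFCycle := by
      intro k' hk' es' vs' hfc'
      obtain ⟨hi1, hi2, hi3⟩ := hfc'
      have hQfc : Q.IsFCycle (fun i => (es' i).val) vs' :=
        ⟨fun a b hab => hi1 (Subtype.ext hab), hi2, fun i => hi3 i⟩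
      have hS₀ := Multigraph.isSimpleCycleOn_of_fcycle hQfc
      have hS₀C : Finset.image (fun i => (es' i).val) Finset.univ ∈ 𝒞 :=
        (hCmem _).2 hS₀
      have hp := hpickmem ⟨_, hS₀C⟩
      obtain ⟨i, -, hieq⟩ := Finset.mem_image.1 hp
      have hinF : pick ⟨_, hS₀C⟩ ∈ F :=
        Finset.mem_image.2 ⟨⟨_, hS₀C⟩, Finset.mem_attach _ _, rfl⟩
      exact (es' i).2 (by rw [hieq]; exact hinF)
    have hbound := Multigraph.forest_bound (Fintype.card {e : E ⊕ E' // e ∉ F}) G₂ rfl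
      ⟨Quotient.mk σ (Sum.inl ρ)⟩ hG₂nc
    have hcompl : Fintype.card {e : E ⊕ E' // e ∉ F} = Fintype.card (E ⊕ E') - F.card := by
      rw [Fintype.card_subtype_compl, Fintype.card_coe]
    have hFle : F.card ≤ Fintype.card (E ⊕ E') := by
      calc F.card ≤ (Finset.univ : Finset (E ⊕ E')).card := Finset.card_le_univ F
      _ = _ := Finset.card_univ
    rw [hcompl, hFcard] at hbound
    omega
  -- cardinality bookkeeping
  set paired : {x : V' // x ≠ ρ'} → Prop := fun v => ∃ u : V, σ.r (Sum.inl u) (Sum.inr v)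
    with hpaired
  set P : ℕ := (Finset.univ.filter paired).card with hP
  have hqP : Fintype.card (Quotient σ) + P = Fintype.card V + Fintype.card {x : V' // x ≠ ρ'} := by
    set A : Finset (Quotient σ) :=
      Finset.univ.image (fun u : V => Quotient.mk σ (Sum.inl u)) with hA
    set Bs : Finset (Quotient σ) := (Finset.univ.filter (fun v => ¬ paired v)).image
      (fun v : {x : V' // x ≠ ρ'} => Quotient.mk σ (Sum.inr v)) with hBs
    have hAcard : A.card = Fintype.card V := by
      rw [hA, Finset.card_image_of_injOn (fun a _ b _ h => (hqL a b).1 h), Finset.card_univ]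
    have hBscard : Bs.card = (Finset.univ.filter (fun v => ¬ paired v)).card := by
      rw [hBs]
      apply Finset.card_image_of_injOn
      intro a _ b _ h
      have ha := hwJn a.1 a.2
      have hb := hwJn b.1 b.2
      have h2 : Quotient.mk σ (wedgeJ ρ ρ' a.1) = Quotient.mk σ (wedgeJ ρ ρ' b.1) := by
        rw [ha, hb]
        exact h
      exact Subtype.ext ((hqR _ _).1 h2)
    have hdisj : Disjoint A Bs := by
      rw [Finset.disjoint_left]
      intro B hBA hBB
      rw [hA] at hBA
      rw [hBs] at hBB
      obtain ⟨u, -, hu⟩ := Finset.mem_image.1 hBA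
      obtain ⟨v, hvf, hv⟩ := Finset.mem_image.1 hBB
      have hp : paired v := ⟨u, (hqeq _ _).1 (hu.trans hv.symm)⟩
      exact (Finset.mem_filter.1 hvf).2 hp
    have hunion : A ∪ Bs = Finset.univ := by
      apply Finset.eq_univ_of_forall
      intro B
      induction B using Quotient.ind with
      | _ w =>
        rcases w with u | v
        · refine Finset.mem_union_left _ ?_
          rw [hA]
          exact Finset.mem_image.2 ⟨u, Finset.mem_univ _, rfl⟩
        · by_cases hp : paired v
          · obtain ⟨u, hu⟩ := hp
            refine Finset.mem_union_left _ ?_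
            rw [hA]
            exact Finset.mem_image.2 ⟨u, Finset.mem_univ _, Quotient.sound hu⟩
          · refine Finset.mem_union_right _ ?_
            rw [hBs]
            exact Finset.mem_image.2 ⟨v, Finset.mem_filter.2 ⟨Finset.mem_univ _, hp⟩, rfl⟩
    have hcardBlk : Fintype.card (Quotient σ) = A.card + Bs.card := by
      rw [← Finset.card_univ, ← hunion, Finset.card_union_of_disjoint hdisj]
    have hsplit : P + (Finset.univ.filter (fun v => ¬ paired v)).card =
        Fintype.card {x : V' // x ≠ ρ'} := by
      rw [hP, Finset.card_filter_add_card_filter_not, Finset.card_univ]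
    omega
  have hsubcard : Fintype.card {x : V' // x ≠ ρ'} + 1 = Fintype.card V' := by
    have h0 : Fintype.card {x : V' // x ≠ ρ'} = Fintype.card {x : V' // ¬ x = ρ'} :=
      Fintype.card_congr (Equiv.subtypeEquivRight (fun _ => Iff.rfl))
    have h1 : Fintype.card {x : V' // ¬ x = ρ'} =
        Fintype.card V' - Fintype.card {x : V' // x = ρ'} :=
      Fintype.card_subtype_compl _
    rw [Fintype.card_subtype_eq] at h1
    omega
  set M : Finset (Quotient σ) := Finset.univ.filter (fun B => 0 < atB B ∧ 0 < btB B) with hM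
  have hMcard : M.card = P + 1 := by
    have hinj : Set.InjOn (fun v : {x : V' // x ≠ ρ'} => Quotient.mk σ (Sum.inr v))
        ↑(Finset.univ.filter paired) := by
      intro a _ b _ h
      have ha := hwJn a.1 a.2
      have hb := hwJn b.1 b.2
      have h2 : Quotient.mk σ (wedgeJ ρ ρ' a.1) = Quotient.mk σ (wedgeJ ρ ρ' b.1) := by
        rw [ha, hb]
        exact h
      exact Subtype.ext ((hqR _ _).1 h2)
    have hMeq : M = insert (Quotient.mk σ (Sum.inl ρ))
        ((Finset.univ.filter paired).image
          (fun v : {x : V' // x ≠ ρ'} => Quotient.mk σ (Sum.inr v))) := by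
      ext B
      rw [hM, Finset.mem_filter, Finset.mem_insert]
      constructor
      · rintro ⟨-, hat, hbt⟩
        obtain ⟨u, hu⟩ := hat_pos_rep B hat
        obtain ⟨v, hv⟩ := hbt_pos_rep B hbt
        by_cases hvρ : v = ρ'
        · left
          rw [← hv, hvρ, hwJr]
        · right
          refine Finset.mem_image.2 ⟨⟨v, hvρ⟩, ?_, ?_⟩
          · refine Finset.mem_filter.2 ⟨Finset.mem_univ _, ⟨u, ?_⟩⟩
            apply (hqeq _ _).1
            rw [hu, ← hwJn v hvρ]
            exact hv.symm
          · rw [← hwJn v hvρ]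
            exact hv
      · intro h
        refine ⟨Finset.mem_univ _, ?_⟩
        rcases h with h | h
        · subst h
          constructor
          · rw [hat_inl ρ]
            exact hdegpos ρ
          · rw [show Quotient.mk σ (Sum.inl ρ) = Quotient.mk σ (wedgeJ ρ ρ' ρ') from by
              rw [hwJr], hbt_wJ]
            exact hdegpos' ρ'
        · obtain ⟨v, hvf, hv⟩ := Finset.mem_image.1 h
          obtain ⟨u, hu⟩ := (Finset.mem_filter.1 hvf).2
          constructor
          · have h2 : Quotient.mk σ (Sum.inl u) = B := by
              rw [← hv]
              exact Quotient.sound hu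
            rw [← h2, hat_inl]
            exact hdegpos u
          · have h2 : Quotient.mk σ (wedgeJ ρ ρ' v.1) = B := by
              rw [← hv, hwJn v.1 v.2]
            rw [← h2, hbt_wJ]
            exact hdegpos' v.1
    have hnotmem : Quotient.mk σ (Sum.inl ρ) ∉
        (Finset.univ.filter paired).image
          (fun v : {x : V' // x ≠ ρ'} => Quotient.mk σ (Sum.inr v)) := by
      intro hmem
      obtain ⟨v, -, hv⟩ := Finset.mem_image.1 hmem
      have h2 : Quotient.mk σ (wedgeJ ρ ρ' ρ') = Quotient.mk σ (wedgeJ ρ ρ' v.1) := by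
        rw [hwJr, hwJn v.1 v.2]
        exact hv.symm
      exact v.2 ((hqR _ _).1 h2).symm
    rw [hMeq, Finset.card_insert_of_notMem hnotmem, Finset.card_image_of_injOn hinj, hP]
  -- the main degree-matching claim
  have hMain : ∀ B ∈ M, atB B = btB B := by
    by_contra hcon
    push_neg at hcon
    obtain ⟨B₀, hB₀M, hne⟩ := hcon
    set s : ℕ := ∑ x ∈ 𝒞.attach, chg x with hs
    have hs_lb : 2 * 𝒞.card ≤ s := by
      have h1 := Finset.card_nsmul_le_sum 𝒞.attach chg 2 (fun x _ => h_two x)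
      rw [Finset.card_attach, smul_eq_mul, mul_comm] at h1
      exact h1
    have hs_split : s = ∑ B : Quotient σ, ∑ x ∈ 𝒞.attach, cAt B x := by
      rw [hs, Finset.sum_congr rfl (fun x _ => hchg_split x), Finset.sum_comm]
    have hs_ub : s ≤ ∑ B : Quotient σ, min (atB B) (btB B) := by
      rw [hs_split]
      exact Finset.sum_le_sum (fun B _ => le_min (hcAt_le_at B) (hcAt_le_bt B))
    have hmin_zero : ∀ B ∈ Finset.univ.filter (fun B => ¬ (0 < atB B ∧ 0 < btB B)),
        min (atB B) (btB B) = 0 := by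
      intro B hB
      have h1 := (Finset.mem_filter.1 hB).2
      by_cases h2 : atB B = 0
      · simp [h2]
      · have h3 : btB B = 0 := by
          by_contra h4
          exact h1 ⟨Nat.pos_of_ne_zero h2, Nat.pos_of_ne_zero h4⟩
        simp [h3]
    have hsum_min_M : (∑ B : Quotient σ, min (atB B) (btB B)) =
        ∑ B ∈ M, min (atB B) (btB B) := by
      have h1 := Finset.sum_filter_add_sum_filter_not Finset.univ
        (fun B : Quotient σ => 0 < atB B ∧ 0 < btB B) (fun B => min (atB B) (btB B))
      have h2 : (∑ B ∈ Finset.univ.filter (fun B => ¬(0 < atB B ∧ 0 < btB B)),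
          min (atB B) (btB B)) = 0 := Finset.sum_eq_zero hmin_zero
      rw [hM]
      omega
    have hptwise : ∀ B ∈ M, 2 * min (atB B) (btB B) ≤ atB B + btB B := by
      intro B _
      rcases le_total (atB B) (btB B) with h | h
      · rw [min_eq_left h]; omega
      · rw [min_eq_right h]; omega
    have hB₀bound : 2 * min (atB B₀) (btB B₀) + 2 ≤ atB B₀ + btB B₀ := by
      obtain ⟨m, hm⟩ := hdegeven B₀
      rcases le_total (atB B₀) (btB B₀) with h | h
      · rw [min_eq_left h]
        rcases Nat.lt_or_ge (atB B₀) (btB B₀) with h2 | h2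
        · omega
        · omega
      · rw [min_eq_right h]
        omega
    have hMsum : 2 * (∑ B ∈ M, min (atB B) (btB B)) + 2 ≤ ∑ B ∈ M, (atB B + btB B) := by
      rw [Finset.mul_sum]
      rw [← Finset.add_sum_erase M (fun B => 2 * min (atB B) (btB B)) hB₀M,
        ← Finset.add_sum_erase M (fun B => atB B + btB B) hB₀M]
      have h1 : (∑ B ∈ M.erase B₀, 2 * min (atB B) (btB B)) ≤
          ∑ B ∈ M.erase B₀, (atB B + btB B) :=
        Finset.sum_le_sum (fun B hB => hptwise B (Finset.mem_of_mem_erase hB))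
      omega
    have hat_sum : (∑ B : Quotient σ, atB B) = 2 * Fintype.card E := by
      simp only [hatB]
      rw [Finset.sum_comm]
      rw [Finset.sum_congr rfl (fun e _ => Multigraph.sum_mult_eq_two Q (Sum.inl e))]
      rw [Finset.sum_const, Finset.card_univ, smul_eq_mul, mul_comm]
    have hbt_sum : (∑ B : Quotient σ, btB B) = 2 * Fintype.card E' := by
      simp only [hbtB]
      rw [Finset.sum_comm]
      rw [Finset.sum_congr rfl (fun f _ => Multigraph.sum_mult_eq_two Q (Sum.inr f))]
      rw [Finset.sum_const, Finset.card_univ, smul_eq_mul, mul_comm]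
    have hMtotal : (∑ B ∈ M, (atB B + btB B)) +
        ∑ B ∈ Finset.univ.filter (fun B => ¬(0 < atB B ∧ 0 < btB B)), (atB B + btB B) =
        2 * Fintype.card E + 2 * Fintype.card E' := by
      rw [hM, Finset.sum_filter_add_sum_filter_not, Finset.sum_add_distrib, hat_sum, hbt_sum]
    have hoff : 2 * (Finset.univ.filter
          (fun B : Quotient σ => ¬(0 < atB B ∧ 0 < btB B))).card ≤
        ∑ B ∈ Finset.univ.filter (fun B => ¬(0 < atB B ∧ 0 < btB B)), (atB B + btB B) := by
      have h1 := Finset.card_nsmul_le_sum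
        (Finset.univ.filter (fun B : Quotient σ => ¬(0 < atB B ∧ 0 < btB B)))
        (fun B => atB B + btB B) 2 ?_
      · rw [smul_eq_mul, mul_comm] at h1
        exact h1
      · intro B _
        have hp := hB_pos B
        obtain ⟨m, hm⟩ := hdegeven B
        show 2 ≤ atB B + btB B
        omega
    have hMcount : M.card + (Finset.univ.filter
        (fun B : Quotient σ => ¬(0 < atB B ∧ 0 < btB B))).card =
        Fintype.card (Quotient σ) := by
      rw [hM, Finset.card_filter_add_card_filter_not, Finset.card_univ]
    have hEE : Fintype.card (E ⊕ E') = Fintype.card E + Fintype.card E' := Fintype.card_sum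
    omega
  -- conclusions
  have hleafpair : ∀ v : V, t.IsLeaf v → v ≠ ρ →
      ∃ v' : V', t'.IsLeaf v' ∧ v' ≠ ρ' ∧ σ.r (Sum.inl v) (wedgeJ ρ ρ' v') := by
    intro v hleaf hvρ
    have hat1 : atB (Quotient.mk σ (Sum.inl v)) = 1 := by
      rw [hat_inl]
      exact hleaf
    have heven := hdegeven (Quotient.mk σ (Sum.inl v))
    have hbtpos : 0 < btB (Quotient.mk σ (Sum.inl v)) := by
      obtain ⟨m, hm⟩ := heven
      omega
    obtain ⟨v', hv'⟩ := hbt_pos_rep _ hbtpos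
    have hv'ne : v' ≠ ρ' := by
      rintro rfl
      rw [hwJr] at hv'
      exact hvρ ((hqL v ρ).1 hv'.symm)
    have hBM : Quotient.mk σ (Sum.inl v) ∈ M :=
      Finset.mem_filter.2 ⟨Finset.mem_univ _, by omega, hbtpos⟩
    have hbt1 : btB (Quotient.mk σ (Sum.inl v)) = 1 := by
      have h1 := hMain _ hBM
      omega
    have hdeg1 : t'.IsLeaf v' := by
      show t'.degree v' = 1
      have h := hbt_wJ v'
      rw [hv'] at h
      omega
    exact ⟨v', hdeg1, hv'ne, (hqeq _ _).1 hv'.symm⟩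
  refine ⟨hleafpair, ?_, ?_⟩
  · intro v hleaf
    by_cases hvρ : v = ρ
    · refine ⟨ρ', ⟨hρ', ?_⟩, ?_⟩
      · have harg : wedgeJ ρ ρ' ρ' = Sum.inl v := by rw [hwJr, hvρ]
        rw [harg]
      · intro y hy
        have h2 : σ.r (Sum.inl ρ) (wedgeJ ρ ρ' y) := hvρ ▸ hy.2
        have h3 : σ.r (wedgeJ ρ ρ' ρ') (wedgeJ ρ ρ' y) := by
          rw [hwJr]
          exact h2
        exact (hsolid₂ ρ' y h3).symm
    · obtain ⟨v', h1, h2, h3⟩ := hleafpair v hleaf hvρ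
      refine ⟨v', ⟨h1, h3⟩, ?_⟩
      intro y hy
      exact hsolid₂ y v' (σ.iseqv.trans (σ.iseqv.symm hy.2) h3)
  · intro v' hleaf'
    by_cases hv'ρ : v' = ρ'
    · refine ⟨ρ, ⟨hρ, ?_⟩, ?_⟩
      · have harg : wedgeJ ρ ρ' v' = Sum.inl ρ := by rw [hv'ρ, hwJr]
        rw [harg]
      · intro y hy
        have h2 := hy.2
        rw [hv'ρ, hwJr] at h2
        exact hsolid₁ y ρ h2
    · have hbt1 : btB (Quotient.mk σ (wedgeJ ρ ρ' v')) = 1 := by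
        rw [hbt_wJ]
        exact hleaf'
      have heven := hdegeven (Quotient.mk σ (wedgeJ ρ ρ' v'))
      have hatpos : 0 < atB (Quotient.mk σ (wedgeJ ρ ρ' v')) := by
        obtain ⟨m, hm⟩ := heven
        omega
      obtain ⟨u, hu⟩ := hat_pos_rep _ hatpos
      have hBM : Quotient.mk σ (wedgeJ ρ ρ' v') ∈ M :=
        Finset.mem_filter.2 ⟨Finset.mem_univ _, hatpos, by omega⟩
      have hat1 : atB (Quotient.mk σ (wedgeJ ρ ρ' v')) = 1 := by
        have h1 := hMain _ hBM
        omega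
      have hdeg1 : t.IsLeaf u := by
        show t.degree u = 1
        have h := hat_inl u
        rw [hu] at h
        omega
      have hrel : σ.r (Sum.inl u) (wedgeJ ρ ρ' v') := (hqeq _ _).1 hu
      refine ⟨u, ⟨hdeg1, hrel⟩, ?_⟩
      intro y hy
      exact hsolid₁ y u (σ.iseqv.trans hy.2 (σ.iseqv.symm hrel))
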